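/- arXiv:1710.00562 — 9 statements merged into one kernel-verified Lean document; each statement's English description precedes it below -/
import Mathlib

section
/- Let A be an n×n matrix with entries in the field Z/2Z. Suppose that every principal minor of A (the determinant of the submatrix of A obtained by restricting rows and columns to a nonempty subset S of the index set) equals 1, and that det A = 1. Then A is conjugate by a permutation matrix to a unipotent upper triangular matrix; that is, there exists a permutation σ of {1,…,n} such that the matrix B with B_{ij} = A_{σ(i)σ(j)} satisfies B_{ii} = 1 for all i and B_{ij} = 0 whenever j < i. -/
open Matrix

private lemma zmod_val_add_one' {k : ℕ} (hk : 0 < k) (x : ZMod k) :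
    (x + 1).val = (x.val + 1) % k := by
  match k, hk with
  | 1, _ =>
    have h1 : (x + 1).val < 1 := ZMod.val_lt _
    have h2 : x.val < 1 := ZMod.val_lt _
    omega
  | (m+2), _ =>
    haveI : Fact (1 < m + 2) := ⟨by omega⟩
    rw [ZMod.val_add, ZMod.val_one]

private lemma cyc_of_path' {α : Type*} (r : α → α → Prop) (d : ℕ) (hd : 0 < d)
    (p : ℕ → α) (hp : ∀ l, l + 1 < d → r (p l) (p (l + 1)))
    (hlast : r (p (d - 1)) (p 0)) :
    ∃ g : ZMod d → α, ∀ x, r (g x) (g (x + 1)) := by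
  haveI : NeZero d := ⟨hd.ne'⟩
  refine ⟨fun x => p x.val, fun x => ?_⟩
  have h1 := zmod_val_add_one' hd x
  have hx := ZMod.val_lt x
  show r (p x.val) (p ((x + 1).val))
  rcases lt_or_ge (x.val + 1) d with h | h
  · rw [h1, Nat.mod_eq_of_lt h]
    exact hp _ h
  · have hxv : x.val = d - 1 := by omega
    have h0 : (x.val + 1) % d = 0 := by
      have : x.val + 1 = d := by omega
      simp [this]
    rw [h1, h0, hxv]
    exact hlast

private lemma transGen_path' {α : Type*} (r : α → α → Prop) {a b : α}
    (h : Relation.TransGen r a b) :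
    ∃ m, ∃ f : ℕ → α, f 0 = a ∧ f (m + 1) = b ∧ ∀ l ≤ m, r (f l) (f (l + 1)) := by
  induction h with
  | @single b hab =>
    refine ⟨0, fun l => if l = 0 then a else b, by simp, by simp, ?_⟩
    intro l hl
    interval_cases l
    simpa using hab
  | @tail b c hab hbc ih =>
    obtain ⟨m, f, h0, h1, hstep⟩ := ih
    refine ⟨m + 1, fun l => if l ≤ m + 1 then f l else c, by simp [h0], by
      simp, ?_⟩
    intro l hl
    rcases Nat.lt_or_ge l (m + 1) with h | h
    · have e1 : l ≤ m + 1 := by omega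
      have e2 : l + 1 ≤ m + 1 := by omega
      simp only [if_pos e1, if_pos e2]
      exact hstep l (by omega)
    · have e : l = m + 1 := by omega
      subst e
      simp only [le_refl, if_pos, if_neg (by omega : ¬ (m + 1 + 1 ≤ m + 1))]
      rw [h1]
      exact hbc

/-- The digraph of off-diagonal 1-entries of `A` is acyclic. -/
private lemma acyclic_of_minors {n : ℕ} (A : Matrix (Fin n) (Fin n) (ZMod 2))
    (hminor : ∀ S : Finset (Fin n), S.Nonempty →
      (A.submatrix (fun x : S => (x : Fin n)) (fun x : S => (x : Fin n))).det = 1)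
    (hdiag : ∀ i, A i i = 1)
    (i : Fin n) :
    ¬ Relation.TransGen (fun i j => i ≠ j ∧ A i j = 1) i i := by
  classical
  set r : Fin n → Fin n → Prop := fun i j => i ≠ j ∧ A i j = 1 with hrdef
  intro hi
  have hzmod : ∀ a : ZMod 2, a ≠ 1 → a = 0 := by decide
  obtain ⟨m, f, hf0, hf1, hfs⟩ := transGen_path' r hi
  have hC : ∃ k, 0 < k ∧ ∃ g : ZMod k → Fin n, ∀ x, r (g x) (g (x + 1)) := by
    refine ⟨m + 1, Nat.succ_pos m,
      cyc_of_path' r (m + 1) (Nat.succ_pos m) f (fun l hl => hfs l (by omega)) ?_⟩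
    have he : f 0 = f (m + 1) := by rw [hf0, hf1]
    simp only [Nat.add_sub_cancel]
    rw [he]
    exact hfs m le_rfl
  set k := Nat.find hC with hkdef
  obtain ⟨hk, g, hg⟩ := Nat.find_spec hC
  have hmin : ∀ d, d < k →
      ¬ (0 < d ∧ ∃ g' : ZMod d → Fin n, ∀ x, r (g' x) (g' (x + 1))) :=
    fun d hd => Nat.find_min hC hd
  haveI : NeZero k := ⟨hk.ne'⟩
  have hk1 : k ≠ 1 := by
    intro h
    have hxx : (0 : ZMod k) + 1 = 0 := by
      have h1 : ((1 : ℕ) : ZMod k) = 0 := by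
        rw [ZMod.natCast_eq_zero_iff, h]
      rw [zero_add, ← Nat.cast_one, h1]
    have h0 := hg 0
    rw [hxx] at h0
    exact h0.1 rfl
  have hx1 : ∀ x : ZMod k, x + 1 ≠ x := by
    intro x hx
    have h1 : (1 : ZMod k) = 0 := by
      have : x + 1 = x + 0 := by rw [hx, add_zero]
      exact add_left_cancel this
    rw [show ((1 : ZMod k) = ((1 : ℕ) : ZMod k)) by simp] at h1
    rw [ZMod.natCast_eq_zero_iff] at h1
    exact hk1 (Nat.dvd_one.mp h1)
  -- injectivity of g
  have ginj : Function.Injective g := by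
    intro a b hab
    by_contra hne
    set d := (b - a).val with hd
    have hd0 : 0 < d := by
      rw [hd]
      have hba : b - a ≠ 0 := sub_ne_zero.mpr (Ne.symm hne)
      have := (ZMod.val_eq_zero (b - a)).not.mpr hba
      omega
    have hdk : d < k := ZMod.val_lt _
    apply hmin d hdk
    refine ⟨hd0, cyc_of_path' r d hd0 (fun l => g (a + (l : ZMod k))) ?_ ?_⟩
    · intro l hl
      have h := hg (a + (l : ZMod k))
      have hcast : a + ((l + 1 : ℕ) : ZMod k) = a + (l : ZMod k) + 1 := by
        push_cast
        ring
      show r (g (a + (l : ZMod k))) (g (a + ((l + 1 : ℕ) : ZMod k)))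
      rw [hcast]
      exact h
    · have hcd : ((d : ℕ) : ZMod k) = b - a := by
        rw [hd]
        exact ZMod.natCast_rightInverse (b - a)
      have h2 : ((d - 1 : ℕ) : ZMod k) + 1 = ((d : ℕ) : ZMod k) := by
        have hd1 : d - 1 + 1 = d := by omega
        calc ((d - 1 : ℕ) : ZMod k) + 1 = ((d - 1 + 1 : ℕ) : ZMod k) := by
              rw [Nat.cast_add, Nat.cast_one]
          _ = ((d : ℕ) : ZMod k) := by rw [hd1]
      have h := hg (a + ((d - 1 : ℕ) : ZMod k))
      rw [add_assoc, h2, hcd] at h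
      have hb : a + (b - a) = b := by ring
      rw [hb, ← hab] at h
      show r (g (a + ((d - 1 : ℕ) : ZMod k))) (g (a + ((0 : ℕ) : ZMod k)))
      simpa using h
  -- no chords
  have hchord : ∀ x y : ZMod k, A (g x) (g y) = 1 → y ≠ x → y = x + 1 := by
    intro x y hA hyx
    by_contra hy1
    set d := (x - y).val + 1 with hd
    have hd0 : 0 < d := Nat.succ_pos _
    have hk2 : 2 ≤ k := by
      have hk' : 0 < k := hk
      omega
    have hdk : d < k := by
      have h1 : (x - y).val < k := ZMod.val_lt _
      have hne1 : (x - y).val ≠ k - 1 := by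
        intro hval
        apply hy1
        have hc : (x - y) = ((k - 1 : ℕ) : ZMod k) := by
          rw [← hval]
          exact (ZMod.natCast_rightInverse (x - y)).symm
        have hc2 : ((k - 1 : ℕ) : ZMod k) + 1 = 0 := by
          have hk1' : k - 1 + 1 = k := by omega
          calc ((k - 1 : ℕ) : ZMod k) + 1 = ((k - 1 + 1 : ℕ) : ZMod k) := by
                rw [Nat.cast_add, Nat.cast_one]
            _ = ((k : ℕ) : ZMod k) := by rw [hk1']
            _ = 0 := ZMod.natCast_self k
        have h3 : x - y + 1 = 0 := by rw [hc]; exact hc2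
        linear_combination -h3
      omega
    apply hmin d hdk
    refine ⟨hd0, cyc_of_path' r d hd0 (fun l => g (y + (l : ZMod k))) ?_ ?_⟩
    · intro l hl
      have h := hg (y + (l : ZMod k))
      have hcast : y + ((l + 1 : ℕ) : ZMod k) = y + (l : ZMod k) + 1 := by
        push_cast
        ring
      show r (g (y + (l : ZMod k))) (g (y + ((l + 1 : ℕ) : ZMod k)))
      rw [hcast]
      exact h
    · show r (g (y + ((d - 1 : ℕ) : ZMod k))) (g (y + ((0 : ℕ) : ZMod k)))
      have hcd : ((d - 1 : ℕ) : ZMod k) = x - y := by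
        rw [hd]
        simp only [Nat.add_sub_cancel]
        exact ZMod.natCast_rightInverse (x - y)
      have hy : y + (x - y) = x := by ring
      rw [hcd, hy]
      simp only [Nat.cast_zero, add_zero]
      exact ⟨fun he => hyx (ginj he).symm, hA⟩
  -- build the submatrix on the cycle and show its determinant vanishes
  set S : Finset (Fin n) := Finset.image g Finset.univ with hS
  have hSne : S.Nonempty := ⟨g 0, Finset.mem_image_of_mem g (Finset.mem_univ 0)⟩
  have hmemS : ∀ x : ZMod k, g x ∈ S := fun x =>
    Finset.mem_image_of_mem g (Finset.mem_univ x)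
  let ε : ZMod k ≃ ↥S :=
    Equiv.ofBijective (fun x => ⟨g x, hmemS x⟩)
      ⟨fun a b h => ginj (congrArg Subtype.val h), by
        rintro ⟨y, hy⟩
        rw [hS, Finset.mem_image] at hy
        obtain ⟨x, _, hx⟩ := hy
        exact ⟨x, Subtype.ext hx⟩⟩
  set M : Matrix (ZMod k) (ZMod k) (ZMod 2) :=
    Matrix.of (fun x y => A (g x) (g y)) with hM
  have hdetM : M.det = 1 := by
    have h := hminor S hSne
    rw [← Matrix.det_submatrix_equiv_self ε] at h
    exact h
  have hMdiag : ∀ x, M x x = 1 := fun x => hdiag (g x)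
  have hMsucc : ∀ x, M x (x + 1) = 1 := fun x => (hg x).2
  have hMzero : ∀ x y, y ≠ x → y ≠ x + 1 → M x y = 0 := by
    intro x y h1 h2
    by_contra h
    have hA1 : A (g x) (g y) = 1 := by
      by_contra h'
      exact h (hzmod _ h')
    exact h2 (hchord x y hA1 h1)
  have hker : M *ᵥ (fun _ => (1 : ZMod 2)) = 0 := by
    funext x
    have h1 : (M *ᵥ fun _ => (1 : ZMod 2)) x = ∑ y, M x y := by
      simp [Matrix.mulVec, dotProduct]
    have hsum : ∑ y, M x y = ∑ y ∈ ({x, x + 1} : Finset (ZMod k)), M x y := by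
      refine (Finset.sum_subset (Finset.subset_univ _) ?_).symm
      intro y _ hy
      simp only [Finset.mem_insert, Finset.mem_singleton, not_or] at hy
      exact hMzero x y hy.1 hy.2
    have hxne : x ≠ x + 1 := fun h => (hx1 x) h.symm
    rw [h1, hsum, Finset.sum_pair hxne, hMdiag, hMsucc]
    rfl
  have hdet0 : M.det = 0 := by
    rw [← Matrix.exists_mulVec_eq_zero_iff]
    refine ⟨fun _ => 1, ?_, hker⟩
    intro h0
    have := congrFun h0 0
    simp at this
  rw [hdetM] at hdet0
  exact one_ne_zero hdet0

/-- Topological sorting of an acyclic relation on `Fin n`. -/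
private lemma topo_sort {n : ℕ} (r : Fin n → Fin n → Prop)
    (hacyc : ∀ i, ¬ Relation.TransGen r i i) :
    ∃ σ : Equiv.Perm (Fin n), ∀ i j, j < i → ¬ r (σ i) (σ j) := by
  classical
  let q : Fin n → Fin n → Prop := fun a b => a = b ∨ Relation.TransGen r a b
  haveI hq : IsPartialOrder (Fin n) q :=
    { refl := fun a => Or.inl rfl
      trans := by
        rintro a b c (rfl | hab) (rfl | hbc)
        · exact Or.inl rfl
        · exact Or.inr hbc
        · exact Or.inr hab
        · exact Or.inr (hab.trans hbc)
      antisymm := by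
        rintro a b (rfl | hab) h2
        · rfl
        · rcases h2 with rfl | hba
          · rfl
          · exact absurd (hab.trans hba) (hacyc a) }
  obtain ⟨s, hslin, hqs⟩ := extend_partialOrder q
  haveI := hslin
  let t : Fin n → Fin n → Prop := fun a b => s a b ∧ a ≠ b
  haveI ht : IsStrictTotalOrder (Fin n) t :=
    { trichotomous := fun a b hab hba => by
        rcases eq_or_ne a b with rfl | hne
        · rfl
        · rcases total_of s a b with h | h
          · exact absurd ⟨h, hne⟩ hab
          · exact absurd ⟨h, hne.symm⟩ hba
      irrefl := fun a h => h.2 rfl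
      trans := fun a b c h1 h2 =>
        ⟨_root_.trans_of s h1.1 h2.1, by
          rintro rfl
          exact h1.2 (antisymm_of s h1.1 h2.1)⟩ }
  haveI : DecidableRel t := fun a b => Classical.dec _
  let L : LinearOrder (Fin n) := linearOrderOfSTO t
  let φ := @Fintype.orderIsoFinOfCardEq (Fin n) L _ n (Fintype.card_fin n)
  refine ⟨φ.toEquiv, fun i j hij hr => ?_⟩
  have hvij : (j : ℕ) < (i : ℕ) := hij
  have hne : φ.toEquiv i ≠ φ.toEquiv j := fun he => by
    have := congrArg Fin.val (φ.toEquiv.injective he)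
    omega
  have hs : s (φ.toEquiv i) (φ.toEquiv j) :=
    hqs _ _ (Or.inr (Relation.TransGen.single hr))
  have hL : φ.toEquiv i = φ.toEquiv j ∨ t (φ.toEquiv i) (φ.toEquiv j) :=
    Or.inr ⟨hs, hne⟩
  have hle : i ≤ j := φ.map_rel_iff.mp hL
  have : (i : ℕ) ≤ (j : ℕ) := hle
  omega

/-- A Z/2Z-matrix all of whose principal minors equal 1 (in particular
`det A = 1`) is conjugate by a permutation matrix to a unipotent upper
triangular matrix. -/
theorem stmt0 (n : ℕ) (A : Matrix (Fin n) (Fin n) (ZMod 2))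
    (hminor : ∀ S : Finset (Fin n), S.Nonempty →
      (A.submatrix (fun x : S => (x : Fin n)) (fun x : S => (x : Fin n))).det = 1)
    (hdet : A.det = 1) :
    ∃ σ : Equiv.Perm (Fin n),
      (∀ i, A (σ i) (σ i) = 1) ∧ ∀ i j, j < i → A (σ i) (σ j) = 0 := by
  classical
  have hzmod : ∀ a : ZMod 2, a ≠ 1 → a = 0 := by decide
  have hdiag : ∀ i, A i i = 1 := by
    intro i
    have h := hminor {i} ⟨i, Finset.mem_singleton_self i⟩
    haveI : Unique ({i} : Finset (Fin n)) :=
      ⟨⟨⟨i, Finset.mem_singleton_self i⟩⟩, by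
        rintro ⟨a, ha⟩
        simp only [Finset.mem_singleton] at ha
        subst ha
        rfl⟩
    rw [Matrix.det_unique] at h
    have hd : ((default : ({i} : Finset (Fin n))) : Fin n) = i := by
      have hm := (default : ({i} : Finset (Fin n))).2
      exact Finset.mem_singleton.mp hm
    rw [Matrix.submatrix_apply, hd] at h
    exact h
  obtain ⟨σ, hσ⟩ := topo_sort (fun i j => i ≠ j ∧ A i j = 1)
    (acyclic_of_minors A hminor hdiag)
  refine ⟨σ, fun i => hdiag _, fun i j hij => ?_⟩
  have h := hσ i j hij
  by_contra hA
  have hA1 : A (σ i) (σ j) = 1 := by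
    by_contra h'
    exact hA (hzmod _ h')
  have hne : σ i ≠ σ j := fun he => absurd (σ.injective he) (by omega)
  exact h ⟨hne, hA1⟩
end

section
/- Let m ≥ 1 and let n_1,…,n_m be positive integers. For each pair (i,j) with 1 ≤ i,j ≤ m let a_i^j be a row vector of length n_j with entries in Z/2Z (so the data form an m×m 'vector matrix' A). For every selection k = (k_1,…,k_m) with 1 ≤ k_j ≤ n_j, let A_{k_1⋯k_m} be the m×m matrix over Z/2Z whose (i,j) entry is the k_j-th entry of the vector a_i^j. Suppose that for every such selection, every principal minor of A_{k_1⋯k_m} equals 1. Then A is conjugate by a permutation to a unipotent upper triangular vector matrix; that is, there exists a permutation σ of {1,…,m} such that for all i every entry of the vector a_{σ(i)}^{σ(i)} equals 1, and for all i,j with j < i every entry of the vector a_{σ(i)}^{σ(j)} equals 0. -/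
namespace Stmt1Aux

variable {m : ℕ} {n : Fin m → ℕ}

/-- The edge relation: `i → j` iff some entry of the vector `a i j` is 1. -/
def rel (a : ∀ (_i j : Fin m), Fin (n j) → ZMod 2) (i j : Fin m) : Prop :=
  i ≠ j ∧ ∃ t, a i j t = 1

lemma zmod2_cases (x : ZMod 2) : x = 0 ∨ x = 1 := by revert x; decide

lemma fin_add_one_val_of_lt {k : ℕ} [NeZero k] {i : Fin k} (h : i.val + 1 < k) :
    (i + 1).val = i.val + 1 := by
  rw [Fin.val_add, Fin.val_one']
  have h1 : 1 % k = 1 := Nat.mod_eq_of_lt (by omega)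
  rw [h1, Nat.mod_eq_of_lt h]

lemma fin_add_one_eq_zero {k : ℕ} [NeZero k] {i : Fin k} (h : i.val + 1 = k) :
    i + 1 = 0 := by
  apply Fin.ext
  rcases Nat.lt_or_ge k 2 with h2 | h2
  · have hk1 : k = 1 := by have := i.isLt; omega
    subst hk1
    simp [Fin.val_add, Nat.mod_one]
  · rw [Fin.val_add, Fin.val_one', Nat.mod_eq_of_lt (by omega : 1 < k), h, Nat.mod_self,
      Fin.val_zero]

lemma fin_add_one_ne {k : ℕ} [NeZero k] (hk2 : 2 ≤ k) (i : Fin k) : i + 1 ≠ i := by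
  intro h
  rcases Nat.lt_or_ge (i.val + 1) k with hlt | hge
  · have := fin_add_one_val_of_lt hlt
    rw [h] at this; omega
  · have h1 : i.val + 1 = k := by have := i.isLt; omega
    have := fin_add_one_eq_zero h1
    rw [h] at this
    have : i.val = 0 := by rw [this]; rfl
    omega

section

variable (hn : ∀ j, 1 ≤ n j) (a : ∀ (_i j : Fin m), Fin (n j) → ZMod 2)
variable (hminor : ∀ (k : ∀ j : Fin m, Fin (n j)) (S : Finset (Fin m)), S.Nonempty →
      (Matrix.submatrix (fun i j : Fin m => a i j (k j))
        (fun x : S => (x : Fin m)) (fun x : S => (x : Fin m))).det = 1)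

include hn hminor in
lemma diag_one (i : Fin m) (t : Fin (n i)) : a i i t = 1 := by
  classical
  set κ : ∀ j : Fin m, Fin (n j) :=
    fun j => if h : i = j then Fin.cast (congrArg n h) t else ⟨0, hn j⟩ with hκ
  have hdet := hminor κ {i} ⟨i, Finset.mem_singleton_self i⟩
  letI : Unique ({i} : Finset (Fin m)) :=
    ⟨⟨⟨i, Finset.mem_singleton_self i⟩⟩, by
      rintro ⟨x, hx⟩
      simp only [Finset.mem_singleton] at hx
      subst hx; rfl⟩
  rw [Matrix.det_unique] at hdet
  have hκi : κ i = t := by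
    rw [hκ]; simp only [dif_pos rfl]
    apply Fin.ext
    simp [Fin.coe_cast]
  have hd : ((default : ({i} : Finset (Fin m))) : Fin m) = i := rfl
  change a i i (κ i) = 1 at hdet
  rw [hκi] at hdet
  exact hdet

/-- A cyclic walk in the digraph. -/
def IsCyc {k : ℕ} [NeZero k] (g : Fin k → Fin m) : Prop :=
  ∀ t : Fin k, rel a (g t) (g (t + 1))

lemma isCyc_rotate {k : ℕ} [NeZero k] {g : Fin k → Fin m} (hg : IsCyc a g) (i : Fin k) :
    IsCyc a (fun t => g (i + t)) := by
  intro t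
  have := hg (i + t)
  rwa [add_assoc] at this

lemma isCyc_trunc {k : ℕ} [NeZero k] {g : Fin k → Fin m} (hg : IsCyc a g)
    (k' : ℕ) (h0 : 0 < k') (hle : k' ≤ k)
    (hend : rel a (g ⟨k' - 1, by omega⟩) (g 0)) :
    letI : NeZero k' := ⟨h0.ne'⟩
    IsCyc a (fun t : Fin k' => g (Fin.castLE hle t)) := by
  letI : NeZero k' := ⟨h0.ne'⟩
  intro t
  rcases Nat.lt_or_ge (t.val + 1) k' with hlt | hge
  · have h1 : Fin.castLE hle (t + 1) = Fin.castLE hle t + 1 := by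
      apply Fin.ext
      rw [Fin.coe_castLE, fin_add_one_val_of_lt hlt,
        fin_add_one_val_of_lt (show (Fin.castLE hle t).val + 1 < k by
          rw [Fin.coe_castLE]; omega), Fin.coe_castLE]
    show rel a (g (Fin.castLE hle t)) (g (Fin.castLE hle (t+1)))
    rw [h1]
    exact hg (Fin.castLE hle t)
  · have h1 : t.val + 1 = k' := by have := t.isLt; omega
    have h2 : t + 1 = 0 := fin_add_one_eq_zero h1
    have h3 : Fin.castLE hle t = ⟨k' - 1, by omega⟩ := by
      apply Fin.ext; rw [Fin.coe_castLE]; show t.val = k' - 1; omega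
    have h4 : Fin.castLE hle (0 : Fin k') = 0 := by
      apply Fin.ext; simp
    show rel a (g (Fin.castLE hle t)) (g (Fin.castLE hle (t+1)))
    rw [h2, h3, h4]
    exact hend

include hn hminor in
lemma no_cyc : ∀ (k : ℕ) (hk : 0 < k) (g : Fin k → Fin m),
    (letI : NeZero k := ⟨hk.ne'⟩; IsCyc a g) → False := by
  intro k
  induction k using Nat.strong_induction_on with
  | _ k IH =>
  intro hk g hcyc
  letI : NeZero k := ⟨hk.ne'⟩
  rcases Nat.lt_or_ge k 2 with hk1 | hk2
  · have hk1 : k = 1 := by omega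
    subst hk1
    have h := hcyc 0
    have h0 : (0 : Fin 1) + 1 = 0 := Subsingleton.elim _ _
    rw [h0] at h
    exact h.1 rfl
  by_cases hdup : ∃ i j : Fin k, i ≠ j ∧ g i = g j
  · obtain ⟨i, j, hij, hgij⟩ := hdup
    have hcyc₁ : IsCyc a (fun t => g (i + t)) := isCyc_rotate a hcyc i
    set g₁ : Fin k → Fin m := fun t => g (i + t) with hg₁
    set d : Fin k := j - i with hd
    have hd0 : d ≠ 0 := by
      rw [hd]; intro h; exact hij (sub_eq_zero.mp h).symm
    have hdval : 0 < d.val := Nat.pos_of_ne_zero (fun h => hd0 (Fin.ext h))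
    have hdlt : d.val < k := d.isLt
    have hend : rel a (g₁ ⟨d.val - 1, by omega⟩) (g₁ 0) := by
      have h5 := hcyc₁ ⟨d.val - 1, by omega⟩
      have h6 : (⟨d.val - 1, by omega⟩ : Fin k) + 1 = d := by
        apply Fin.ext
        rw [fin_add_one_val_of_lt (by show d.val - 1 + 1 < k; omega)]
        show d.val - 1 + 1 = d.val; omega
      rw [h6] at h5
      have h7 : g₁ d = g₁ 0 := by
        show g (i + (j - i)) = g (i + 0)
        have h8 : i + (j - i) = j := by abel
        rw [h8, add_zero, ← hgij]
      rwa [h7] at h5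
    have htr := isCyc_trunc a hcyc₁ d.val hdval (le_of_lt hdlt) hend
    exact IH d.val hdlt hdval _ htr
  · push_neg at hdup
    have ginj : Function.Injective g := by
      intro i j h
      by_contra hne
      exact hdup i j hne h
    by_cases hchord : ∃ i j : Fin k, j ≠ i ∧ j ≠ i + 1 ∧ rel a (g i) (g j)
    · obtain ⟨i, j, hji, hji1, hrel⟩ := hchord
      have hcyc₁ : IsCyc a (fun t => g (j + t)) := isCyc_rotate a hcyc j
      set g₁ : Fin k → Fin m := fun t => g (j + t) with hg₁
      set d : Fin k := i - j with hd
      have hd0 : d ≠ 0 := by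
        rw [hd]; intro h; exact hji (sub_eq_zero.mp h).symm
      have hdval : 0 < d.val := Nat.pos_of_ne_zero (fun h => hd0 (Fin.ext h))
      have hdk : d.val ≠ k - 1 := by
        intro h
        apply hji1
        have h2 : d + 1 = 0 := fin_add_one_eq_zero (by omega)
        have h3 : i = j + d := by rw [hd]; abel
        rw [h3, add_assoc, h2, add_zero]
      have hk' : d.val + 1 < k := by have := d.isLt; omega
      have hend : rel a (g₁ ⟨d.val + 1 - 1, by omega⟩) (g₁ 0) := by
        have h3 : g₁ ⟨d.val + 1 - 1, by omega⟩ = g i := by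
          show g (j + ⟨d.val + 1 - 1, by omega⟩) = g i
          congr 1
          have h4 : (⟨d.val + 1 - 1, by omega⟩ : Fin k) = d := by
            apply Fin.ext; show d.val + 1 - 1 = d.val; omega
          rw [h4, hd]; abel
        have h4 : g₁ 0 = g j := by show g (j + 0) = g j; rw [add_zero]
        rw [h3, h4]; exact hrel
      have htr := isCyc_trunc a hcyc₁ (d.val + 1) (by omega) (by omega) hend
      exact IH (d.val + 1) hk' (by omega) _ htr
    · push_neg at hchord
      choose w hw using fun t : Fin k => (hcyc t).2
      classical
      set κ : ∀ x : Fin m, Fin (n x) := fun x =>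
        if h : ∃ t : Fin k, g (t + 1) = x then Fin.cast (congrArg n h.choose_spec) (w h.choose)
        else ⟨0, hn x⟩ with hκ
      have key1 : ∀ t : Fin k, a (g t) (g (t + 1)) (κ (g (t + 1))) = 1 := by
        intro t
        have hex : ∃ s : Fin k, g (s + 1) = g (t + 1) := ⟨t, rfl⟩
        have hgen : ∀ (s : Fin k) (hs : g (s + 1) = g (t + 1)),
            a (g t) (g (t + 1)) (Fin.cast (congrArg n hs) (w s)) = 1 := by
          intro s hs
          obtain rfl : s = t := add_right_cancel (ginj hs)
          have hc : Fin.cast (congrArg n hs) (w s) = w s := Fin.ext (by simp)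
          rw [hc]; exact hw s
        rw [hκ]
        simp only [dif_pos hex]
        exact hgen hex.choose hex.choose_spec
      have key2 : ∀ (t s : Fin k), s ≠ t → s ≠ t + 1 → ∀ u, a (g t) (g s) u = 0 := by
        intro t s h1 h2 u
        have hnr := hchord t s h1 h2
        rcases zmod2_cases (a (g t) (g s) u) with h | h
        · exact h
        · exact absurd ⟨fun he => h1 (ginj he).symm, ⟨u, h⟩⟩ hnr
      have hSdef : Finset.univ.image g = Finset.univ.image g := rfl
      have hgmem : ∀ t, g t ∈ Finset.univ.image g := fun t => Finset.mem_image_of_mem g (Finset.mem_univ t)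
      have hSne : (Finset.univ.image g).Nonempty := ⟨g 0, hgmem 0⟩
      have hdet := hminor κ (Finset.univ.image g) hSne
      have hker : ∀ x : (Finset.univ.image g : Finset (Fin m)), (∑ y : (Finset.univ.image g : Finset (Fin m)), a (x : Fin m) (y : Fin m) (κ y)) = 0 := by
        intro x
        obtain ⟨i, -, hi⟩ := Finset.mem_image.mp x.2
        have hsum : (∑ y : (Finset.univ.image g : Finset (Fin m)), a (x : Fin m) (y : Fin m) (κ y))
            = ∑ y ∈ Finset.univ.image g, a (x : Fin m) y (κ y) := Finset.sum_coe_sort (Finset.univ.image g) (fun y => a (x : Fin m) y (κ y))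
        rw [hsum, Finset.sum_image (fun p _ q _ h => ginj h)]
        have hx : (x : Fin m) = g i := hi.symm
        rw [hx]
        have hterm : ∀ t : Fin k, a (g i) (g t) (κ (g t)) =
            (if t = i then 1 else 0) + (if t = i + 1 then 1 else 0) := by
          intro t
          by_cases h1 : t = i
          · subst h1
            rw [if_pos rfl, if_neg (fun h => fin_add_one_ne hk2 t h.symm),
              diag_one hn a hminor (g t) (κ (g t))]
            exact (add_zero 1).symm
          · by_cases h2 : t = i + 1
            · subst h2
              rw [if_neg h1, if_pos rfl, key1 i]
              exact (zero_add 1).symm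
            · rw [if_neg h1, if_neg h2, key2 i t h1 h2, add_zero]
        rw [Finset.sum_congr rfl (fun t _ => hterm t), Finset.sum_add_distrib,
          Finset.sum_ite_eq' Finset.univ i (fun _ => (1 : ZMod 2)),
          Finset.sum_ite_eq' Finset.univ (i + 1) (fun _ => (1 : ZMod 2))]
        simp only [Finset.mem_univ, if_pos]
        decide
      have hex0 : ∃ v, v ≠ 0 ∧ Matrix.mulVec
          (Matrix.submatrix (fun i j : Fin m => a i j (κ j))
            (fun x : (Finset.univ.image g : Finset (Fin m)) => (x : Fin m)) (fun x : (Finset.univ.image g : Finset (Fin m)) => (x : Fin m))) v = 0 := by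
        refine ⟨fun _ => 1, ?_, ?_⟩
        · intro h
          have h2 := congrFun h ⟨g 0, hgmem 0⟩
          exact one_ne_zero h2
        · funext x
          have h2 := hker x
          simp only [Matrix.mulVec, dotProduct, mul_one]
          exact h2
      have hdet0 := Matrix.exists_mulVec_eq_zero_iff.mp hex0
      rw [hdet] at hdet0
      exact one_ne_zero hdet0

include hn hminor in
lemma no_loop (i j : Fin m) (hij : rel a i j) : ¬ Relation.ReflTransGen (rel a) j i := by
  intro hji
  obtain ⟨l, hchain, hlast⟩ := List.exists_isChain_cons_of_relationReflTransGen hji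
  have hchain' : List.Chain' (rel a) (j :: l) := hchain
  set p : List (Fin m) := j :: l with hp
  have hklen : 0 < p.length := by simp [hp]
  letI : NeZero p.length := ⟨hklen.ne'⟩
  have hcyc : IsCyc a (fun t : Fin p.length => p.get t) := by
    intro t
    rcases Nat.lt_or_ge (t.val + 1) p.length with hlt | hge
    · have h1 : (t + 1 : Fin p.length) = ⟨t.val + 1, hlt⟩ := Fin.ext (fin_add_one_val_of_lt hlt)
      rw [h1]
      have h2 := List.isChain_iff_getElem.mp hchain' t.val (by omega)
      exact h2
    · have h1 : t.val + 1 = p.length := by have := t.isLt; omega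
      have h2 : t + 1 = 0 := fin_add_one_eq_zero h1
      rw [h2]
      have h3 : p.get t = i := by
        rw [← hlast]
        have h4 : t = ⟨p.length - 1, by omega⟩ := Fin.ext (by show t.val = p.length - 1; omega)
        rw [h4]
        exact (List.getLast_eq_getElem (List.cons_ne_nil _ _)).symm
      have h4 : p.get 0 = j := rfl
      show rel a (p.get t) (p.get 0)
      rw [h3, h4]; exact hij
  exact no_cyc hn a hminor p.length hklen _ hcyc

end

end Stmt1Aux

/-- A vector matrix over Z/2Z all of whose principal minors equal 1 is
conjugate by a permutation to a unipotent upper triangular vector matrix. -/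
theorem stmt1 (m : ℕ) (hm : 1 ≤ m) (n : Fin m → ℕ) (hn : ∀ j, 1 ≤ n j)
    (a : ∀ (_i j : Fin m), Fin (n j) → ZMod 2)
    (hminor : ∀ (k : ∀ j : Fin m, Fin (n j)) (S : Finset (Fin m)), S.Nonempty →
      (Matrix.submatrix (fun i j : Fin m => a i j (k j))
        (fun x : S => (x : Fin m)) (fun x : S => (x : Fin m))).det = 1) :
    ∃ σ : Equiv.Perm (Fin m),
      (∀ i, ∀ t : Fin (n (σ i)), a (σ i) (σ i) t = 1) ∧
      ∀ i j, j < i → ∀ t : Fin (n (σ j)), a (σ i) (σ j) t = 0 := by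
  classical
  have hnl : ∀ i j, Stmt1Aux.rel a i j → ¬ Relation.ReflTransGen (Stmt1Aux.rel a) j i :=
    Stmt1Aux.no_loop hn a hminor
  set f : Fin m → ℕ :=
    fun i => (Finset.univ.filter (fun x => Relation.ReflTransGen (Stmt1Aux.rel a) x i)).card
    with hf
  have hmono : ∀ i j, Stmt1Aux.rel a i j → f i < f j := by
    intro i j hij
    apply Finset.card_lt_card
    rw [Finset.ssubset_iff_of_subset]
    · exact ⟨j, Finset.mem_filter.mpr ⟨Finset.mem_univ j, Relation.ReflTransGen.refl⟩,
        fun hc => hnl i j hij ((Finset.mem_filter.mp hc).2)⟩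
    · intro x hx
      rw [Finset.mem_filter] at hx ⊢
      exact ⟨hx.1, hx.2.tail hij⟩
  have key : ∀ (x y iv jv : ℕ), iv < m → x < y → x * m + iv < y * m + jv := by
    intro x y iv jv h1 h2
    nlinarith
  set η : Fin m → ℕ := fun i => f i * m + i.val with hη
  have hηlt : ∀ i j, Stmt1Aux.rel a i j → η i < η j :=
    fun i j hij => key _ _ _ _ i.isLt (hmono i j hij)
  have hηinj : Function.Injective η := by
    intro i j h
    apply Fin.ext
    rcases lt_trichotomy (f i) (f j) with hl | he | hl
    · exact absurd h (Nat.ne_of_lt (key _ _ _ _ i.isLt hl))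
    · have h2 : f i * m + i.val = f j * m + j.val := h
      rw [he] at h2; omega
    · exact absurd h.symm (Nat.ne_of_lt (key _ _ _ _ j.isLt hl))
  set σ : Equiv.Perm (Fin m) := Tuple.sort η with hσ
  have hsm : StrictMono (η ∘ σ) :=
    (Tuple.monotone_sort η).strictMono_of_injective (hηinj.comp σ.injective)
  refine ⟨σ, fun i t => Stmt1Aux.diag_one hn a hminor (σ i) t, ?_⟩
  intro i j hji t
  rcases Stmt1Aux.zmod2_cases (a (σ i) (σ j) t) with h | h
  · exact h
  · exfalso
    have hne : σ i ≠ σ j := fun he => (ne_of_gt hji) (σ.injective he)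
    have h1 := hηlt _ _ ⟨hne, t, h⟩
    have h2 := hsm hji
    simp only [Function.comp_apply] at h2
    omega
end

section
/- Let R be a commutative ring and let u_1,…,u_n ∈ R. Suppose that for each i with 1 ≤ i ≤ n there is an element y_i ∈ R lying in the additive subgroup generated by u_1,…,u_{i−1} (so y_1 = 0), such that u_i(u_i + y_i) = 0, i.e. u_i² = −u_i y_i. Then for every k with 1 ≤ k ≤ n and all nonnegative integers l_1,…,l_k with l_1 + ⋯ + l_k = k + 1, one has u_1^{l_1} u_2^{l_2} ⋯ u_k^{l_k} = 0. -/
/-- If `u 0, …, u (n-1)` in a commutative ring satisfy `u i * (u i + y i) = 0`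
with `y i` in the additive subgroup generated by the earlier `u j`, then any
monomial `u 0 ^ l 0 ⋯ u (k-1) ^ l (k-1)` of total degree `k + 1` vanishes. -/
theorem stmt4 (R : Type*) [CommRing R] (n : ℕ) (u y : ℕ → R)
    (hy : ∀ i < n, y i ∈ AddSubgroup.closure (u '' Set.Iio i))
    (hu : ∀ i < n, u i * (u i + y i) = 0) :
    ∀ k, 1 ≤ k → k ≤ n → ∀ l : ℕ → ℕ,
      (∑ i ∈ Finset.range k, l i) = k + 1 →
      ∏ i ∈ Finset.range k, u i ^ l i = 0 := by
  -- strengthen: sum ≥ k+1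
  suffices H : ∀ k, 1 ≤ k → k ≤ n → ∀ l : ℕ → ℕ,
      k + 1 ≤ ∑ i ∈ Finset.range k, l i →
      ∏ i ∈ Finset.range k, u i ^ l i = 0 by
    intro k hk1 hkn l hl
    exact H k hk1 hkn l (le_of_eq hl.symm)
  intro k
  induction k using Nat.strong_induction_on with
  | _ k IH =>
    intro hk1 hkn
    obtain ⟨j, rfl⟩ : ∃ j, k = j + 1 := ⟨k - 1, by omega⟩
    suffices aux : ∀ m, ∀ l : ℕ → ℕ, l j ≤ m →
        j + 2 ≤ ∑ i ∈ Finset.range (j+1), l i →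
        ∏ i ∈ Finset.range (j+1), u i ^ l i = 0 by
      intro l hl
      exact aux (l j) l le_rfl (by omega)
    intro m
    induction m with
    | zero =>
      intro l hm hl
      rw [Finset.sum_range_succ] at hl
      by_cases hpre : j + 1 ≤ ∑ i ∈ Finset.range j, l i
      · have hj : 1 ≤ j := by
          rcases Nat.eq_zero_or_pos j with rfl | h
          · simp at hpre
          · exact h
        rw [Finset.prod_range_succ, IH j (by omega) hj (by omega) l hpre, zero_mul]
      · omega
    | succ m ih =>
      intro l hm hl
      rw [Finset.sum_range_succ] at hl
      by_cases hpre : j + 1 ≤ ∑ i ∈ Finset.range j, l i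
      · have hj : 1 ≤ j := by
          rcases Nat.eq_zero_or_pos j with rfl | h
          · simp at hpre
          · exact h
        rw [Finset.prod_range_succ, IH j (by omega) hj (by omega) l hpre, zero_mul]
      · have hlj : 2 ≤ l j := by omega
        have hjn : j < n := by omega
        have huj := hu j hjn
        have key : u j ^ l j = -(u j ^ (l j - 1) * y j) := by
          have h2 : u j * u j = -(u j * y j) := by linear_combination huj
          calc u j ^ l j = u j ^ (l j - 2) * (u j * u j) := by
                rw [← pow_two, ← pow_add]; congr 1; omega
            _ = -(u j ^ (l j - 2) * u j * y j) := by rw [h2]; ring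
            _ = -(u j ^ (l j - 1) * y j) := by
                rw [← pow_succ]; congr 3; omega
        rw [Finset.prod_range_succ, key]
        have claim : ∀ z ∈ AddSubgroup.closure (u '' Set.Iio j),
            (∏ i ∈ Finset.range j, u i ^ l i) * (u j ^ (l j - 1) * z) = 0 := by
          intro z hz
          induction hz using AddSubgroup.closure_induction with
          | mem x hx =>
            obtain ⟨i0, hi0, rfl⟩ := hx
            simp only [Set.mem_Iio] at hi0
            set l' : ℕ → ℕ := fun i => if i = i0 then l i + 1
              else if i = j then l j - 1 else l i with hl'
            have hji0 : j ≠ i0 := by omega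
            have prodeq : ∏ i ∈ Finset.range (j+1), u i ^ l' i
                = (∏ i ∈ Finset.range j, u i ^ l i) * u i0 * u j ^ (l j - 1) := by
              rw [Finset.prod_range_succ]
              have h1 : ∏ i ∈ Finset.range j, u i ^ l' i
                  = ∏ i ∈ Finset.range j, (u i ^ l i * if i = i0 then u i else 1) := by
                refine Finset.prod_congr rfl fun i hi => ?_
                have : i ≠ j := by
                  simp only [Finset.mem_range] at hi; omega
                by_cases h : i = i0 <;> simp [hl', h, this, pow_succ]
              rw [h1, Finset.prod_mul_distrib, Finset.prod_ite_eq',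
                if_pos (Finset.mem_range.mpr hi0)]
              congr 1
              simp [hl', hji0]
            have sumeq : j + 2 ≤ ∑ i ∈ Finset.range (j+1), l' i := by
              rw [Finset.sum_range_succ]
              have h1 : ∑ i ∈ Finset.range j, l' i
                  = ∑ i ∈ Finset.range j, (l i + if i = i0 then 1 else 0) := by
                refine Finset.sum_congr rfl fun i hi => ?_
                have : i ≠ j := by
                  simp only [Finset.mem_range] at hi; omega
                by_cases h : i = i0 <;> simp [hl', h, this]
              rw [h1, Finset.sum_add_distrib, Finset.sum_ite_eq',
                if_pos (Finset.mem_range.mpr hi0)]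
              have : l' j = l j - 1 := by simp [hl', hji0]
              omega
            have := ih l' (by simp [hl', hji0]; omega) sumeq
            rw [prodeq] at this
            linear_combination this
          | zero => rw [mul_zero, mul_zero]
          | add x z hx hz hpx hpz =>
            rw [mul_add, mul_add, hpx, hpz, add_zero]
          | neg x hx hpx =>
            rw [mul_neg, mul_neg, hpx, neg_zero]
        rw [mul_neg, claim (y j) (hy j hjn), neg_zero]
end

section
/- Let R be a commutative ring and let u_1,…,u_n ∈ R. Suppose that for each i with 1 ≤ i ≤ n there is an element y_i ∈ R lying in the additive subgroup generated by u_1,…,u_{i−1} (so y_1 = 0), such that u_i(u_i + y_i) = 0. Then for every k with 2 ≤ k ≤ n and all nonnegative integers l_2,…,l_k with l_2 + ⋯ + l_k = k, one has y_2^{l_2} y_3^{l_3} ⋯ y_k^{l_k} = 0. -/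
section Aux

variable {R : Type*} [CommRing R] (n : ℕ) (u y : ℕ → R)

/-- Any monomial in `u 0, …, u (m-1)` of degree `> m` vanishes. -/
lemma lemA
    (hy : ∀ i < n, y i ∈ AddSubgroup.closure (u '' Set.Iio i))
    (hu : ∀ i < n, u i * (u i + y i) = 0) :
    ∀ m, m ≤ n → ∀ M : Multiset ℕ, (∀ j ∈ M, j < m) → m < Multiset.card M →
      (M.map u).prod = 0 := by
  intro m
  induction m using Nat.strong_induction_on with
  | _ m ih =>
  match m with
  | 0 =>
    intro _ M hlt hcard
    obtain ⟨j, hj⟩ := Multiset.card_pos_iff_exists_mem.mp hcard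
    exact absurd (hlt j hj) (Nat.not_lt_zero j)
  | (m' + 1) =>
    intro hmn
    have hm'n : m' ≤ n := le_of_lt (Nat.lt_of_lt_of_le (Nat.lt_succ_self m') hmn)
    suffices H : ∀ c (M : Multiset ℕ), M.count m' = c → (∀ j ∈ M, j < m' + 1) →
        m' + 1 < Multiset.card M → (M.map u).prod = 0 by
      intro M; exact H (M.count m') M rfl
    intro c
    induction c using Nat.strong_induction_on with
    | _ c ihc =>
    intro M hcount hlt hcard
    match c with
    | 0 =>
      refine ih m' (Nat.lt_succ_self m') hm'n M (fun j hj => ?_)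
        (Nat.lt_of_succ_lt hcard)
      have h1 : j < m' + 1 := hlt j hj
      have h2 : j ≠ m' := by
        intro h; subst h
        exact (Multiset.count_eq_zero.mp hcount) hj
      omega
    | 1 =>
      have hmem : m' ∈ M := Multiset.count_pos.mp (by omega)
      obtain ⟨M', rfl⟩ := Multiset.exists_cons_of_mem hmem
      have hc' : M'.count m' = 0 := by
        have := hcount; rw [Multiset.count_cons_self] at this; omega
      have hM' : (M'.map u).prod = 0 := by
        refine ih m' (Nat.lt_succ_self m') hm'n M' (fun j hj => ?_) ?_
        · have h1 : j < m' + 1 := hlt j (Multiset.mem_cons_of_mem hj)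
          have h2 : j ≠ m' := by
            intro h; subst h
            exact absurd hj (Multiset.count_eq_zero.mp hc')
          omega
        · have := hcard; rw [Multiset.card_cons] at this; omega
      simp [hM']
    | (c' + 2) =>
      have hmem : m' ∈ M := Multiset.count_pos.mp (by omega)
      obtain ⟨M1, rfl⟩ := Multiset.exists_cons_of_mem hmem
      have hmem1 : m' ∈ M1 := by
        have := hcount; rw [Multiset.count_cons_self] at this
        exact Multiset.count_pos.mp (by omega)
      obtain ⟨M2, rfl⟩ := Multiset.exists_cons_of_mem hmem1
      have hc2 : M2.count m' = c' := by
        have := hcount; simp [Multiset.count_cons_self] at this; omega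
      have hcard2 : m' + 1 < Multiset.card M2 + 2 := by
        have := hcard; simp [Multiset.card_cons] at this; omega
      have hlt2 : ∀ j ∈ M2, j < m' + 1 := fun j hj =>
        hlt j (Multiset.mem_cons_of_mem (Multiset.mem_cons_of_mem hj))
      set P : R := (M2.map u).prod with hP
      have hsq : u m' * u m' = -(u m' * y m') := by
        have := hu m' (Nat.lt_of_lt_of_le (Nat.lt_succ_self m') hmn)
        ring_nf at this ⊢
        linear_combination this
      have key : (u m' * P) * y m' = 0 := by
        have hym : y m' ∈ AddSubgroup.closure (u '' Set.Iio m') :=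
          hy m' (Nat.lt_of_lt_of_le (Nat.lt_succ_self m') hmn)
        refine AddSubgroup.closure_induction (p := fun z _ => (u m' * P) * z = 0)
          ?_ (by simp) ?_ ?_ hym
        · rintro z ⟨j, hj, rfl⟩
          have hjm : j < m' := hj
          have : (u m' * P) * u j = (((m' ::ₘ j ::ₘ M2)).map u).prod := by
            simp [Multiset.map_cons, Multiset.prod_cons]; ring
          rw [this]
          refine ihc (c' + 1) (by omega) _ ?_ ?_ ?_
          · rw [Multiset.count_cons_self,
              Multiset.count_cons_of_ne (by omega : m' ≠ j)]
            omega
          · intro i hi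
            rcases Multiset.mem_cons.mp hi with rfl | hi
            · omega
            · rcases Multiset.mem_cons.mp hi with rfl | hi
              · omega
              · have := hlt2 i hi; omega
          · simp [Multiset.card_cons]; omega
        · intro a b _ _ ha hb
          rw [mul_add, ha, hb, add_zero]
        · intro a _ ha
          rw [mul_neg, ha, neg_zero]
      calc ((m' ::ₘ m' ::ₘ M2).map u).prod = (u m' * u m') * P := by
            simp [Multiset.map_cons, Multiset.prod_cons]; ring
        _ = -((u m' * P) * y m') := by rw [hsq]; ring
        _ = 0 := by rw [key, neg_zero]

/-- A product of `k > m` elements of the additive closure of `u '' Iio m` vanishes. -/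
lemma lemB
    (hy : ∀ i < n, y i ∈ AddSubgroup.closure (u '' Set.Iio i))
    (hu : ∀ i < n, u i * (u i + y i) = 0)
    (m : ℕ) (hmn : m ≤ n) :
    ∀ (L : Multiset R), (∀ z ∈ L, z ∈ AddSubgroup.closure (u '' Set.Iio m)) →
      m < Multiset.card L → L.prod = 0 := by
  set S : ℕ → Set R := fun j =>
    {x | ∃ M : Multiset ℕ, Multiset.card M = j ∧ (∀ i ∈ M, i < m) ∧ x = (M.map u).prod}
    with hS
  have claim : ∀ (L : Multiset R), (∀ z ∈ L, z ∈ AddSubgroup.closure (u '' Set.Iio m)) →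
      L.prod ∈ AddSubgroup.closure (S (Multiset.card L)) := by
    intro L
    induction L using Multiset.induction with
    | empty =>
      intro _
      refine AddSubgroup.subset_closure ⟨0, by simp⟩
    | cons z L ihL =>
      intro hmem
      have hz : z ∈ AddSubgroup.closure (u '' Set.Iio m) :=
        hmem z (Multiset.mem_cons_self z L)
      have hLp : L.prod ∈ AddSubgroup.closure (S (Multiset.card L)) :=
        ihL (fun w hw => hmem w (Multiset.mem_cons_of_mem hw))
      rw [Multiset.prod_cons, Multiset.card_cons]
      refine AddSubgroup.closure_induction
        (p := fun x _ => z * x ∈ AddSubgroup.closure (S (Multiset.card L + 1)))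
        ?_ (by simpa using AddSubgroup.zero_mem (AddSubgroup.closure (S (Multiset.card L + 1)))) ?_ ?_ hLp
      · rintro x ⟨M, hMc, hMlt, rfl⟩
        refine AddSubgroup.closure_induction
          (p := fun w _ => w * (M.map u).prod ∈
            AddSubgroup.closure (S (Multiset.card L + 1)))
          ?_ (by simpa using AddSubgroup.zero_mem (AddSubgroup.closure (S (Multiset.card L + 1)))) ?_ ?_ hz
        · rintro w ⟨i, hi, rfl⟩
          refine AddSubgroup.subset_closure ⟨i ::ₘ M, by simp [hMc], ?_, by
            simp [Multiset.map_cons, Multiset.prod_cons]⟩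
          intro j hj
          rcases Multiset.mem_cons.mp hj with rfl | hj
          · exact hi
          · exact hMlt j hj
        · intro a b _ _ ha hb
          rw [add_mul]; exact AddSubgroup.add_mem _ ha hb
        · intro a _ ha
          rw [neg_mul]; exact AddSubgroup.neg_mem _ ha
      · intro a b _ _ ha hb
        rw [mul_add]; exact AddSubgroup.add_mem _ ha hb
      · intro a _ ha
        rw [mul_neg]; exact AddSubgroup.neg_mem _ ha
  intro L hmemL hcard
  have h1 : L.prod ∈ AddSubgroup.closure (S (Multiset.card L)) := claim L hmemL
  have h2 : AddSubgroup.closure (S (Multiset.card L)) ≤ ⊥ := by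
    rw [AddSubgroup.closure_le]
    rintro x ⟨M, hMc, hMlt, rfl⟩
    have : (M.map u).prod = 0 := lemA n u y hy hu m hmn M hMlt (by omega)
    simp [this]
  simpa using h2 h1

end Aux

/-- If `u 0, …, u (n-1)` in a commutative ring satisfy `u i * (u i + y i) = 0`
with `y i` in the additive subgroup generated by the earlier `u j`, then any
monomial `y 1 ^ l 1 ⋯ y (k-1) ^ l (k-1)` of total degree `k` vanishes. -/
theorem stmt5 (R : Type*) [CommRing R] (n : ℕ) (u y : ℕ → R)
    (hy : ∀ i < n, y i ∈ AddSubgroup.closure (u '' Set.Iio i))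
    (hu : ∀ i < n, u i * (u i + y i) = 0) :
    ∀ k, 2 ≤ k → k ≤ n → ∀ l : ℕ → ℕ,
      (∑ i ∈ Finset.Ico 1 k, l i) = k →
      ∏ i ∈ Finset.Ico 1 k, y i ^ l i = 0 := by
  intro k hk2 hkn l hsum
  set L : Multiset R :=
    (Finset.Ico 1 k).val.bind (fun i => Multiset.replicate (l i) (y i)) with hL
  have hprod : ∏ i ∈ Finset.Ico 1 k, y i ^ l i = L.prod := by
    rw [hL, Multiset.prod_bind]
    simp [Multiset.prod_replicate]
  have hcard : Multiset.card L = k := by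
    rw [hL, Multiset.card_bind]
    simpa using hsum
  rw [hprod]
  refine lemB n u y hy hu (k - 1) (by omega) L ?_ (by omega)
  intro z hz
  rw [hL, Multiset.mem_bind] at hz
  obtain ⟨i, hi, hz⟩ := hz
  have hz' : z = y i := Multiset.eq_of_mem_replicate hz
  subst hz'
  have hik : i ∈ Finset.Ico 1 k := hi
  rw [Finset.mem_Ico] at hik
  have : y i ∈ AddSubgroup.closure (u '' Set.Iio i) := hy i (by omega)
  refine AddSubgroup.closure_mono (Set.image_mono ?_) this
  intro j hj
  simp only [Set.mem_Iio] at hj ⊢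
  omega
end

section
/- Let R be a commutative ring, let m ≥ 1, let n_1,…,n_m be positive integers, and let u_1,…,u_m ∈ R. Suppose that for each i with 1 ≤ i ≤ m there are elements y^{(i)}_1,…,y^{(i)}_{n_i} ∈ R, each lying in the additive subgroup of R generated by u_1,…,u_{i−1} (for i = 1 this subgroup is {0}), such that u_i · ∏_{j=1}^{n_i} (u_i + y^{(i)}_j) = 0. Then for every k with 1 ≤ k ≤ m and all nonnegative integers l_1,…,l_k with l_1 + ⋯ + l_k = n_1 + ⋯ + n_k + 1, one has u_1^{l_1} u_2^{l_2} ⋯ u_k^{l_k} = 0. -/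
open Finset
open scoped Pointwise

section Aux
variable {R : Type*} [CommRing R]

/-- Monomials in `u 0, …, u i` of total degree `d` with exponent of `u i` at most `a`. -/
def MonSet (u : ℕ → R) (i d a : ℕ) : Set R :=
  { x | ∃ e : ℕ → ℕ, e i ≤ a ∧ (∑ t ∈ range (i+1), e t) = d ∧
        x = ∏ t ∈ range (i+1), u t ^ e t }

lemma span_mul_mem {s t : Set R} {a b : R}
    (ha : a ∈ Submodule.span ℤ s) (hb : b ∈ Submodule.span ℤ t) :
    a * b ∈ Submodule.span ℤ (s * t) := by
  rw [← Submodule.span_mul_span]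
  exact Submodule.mul_mem_mul ha hb

lemma MonSet.mul_u {u : ℕ → R} {i d a t a' : ℕ} (ht : t ≤ i)
    (ha' : a + (if t = i then 1 else 0) ≤ a') {x : R}
    (hx : x ∈ MonSet u i d a) : u t * x ∈ MonSet u i (d+1) a' := by
  obtain ⟨e, hei, hes, rfl⟩ := hx
  have htm : t ∈ range (i+1) := mem_range.mpr (by omega)
  refine ⟨fun s => e s + (if s = t then 1 else 0), ?_, ?_, ?_⟩
  · rcases eq_or_ne t i with rfl | h
    · simp only [if_pos rfl] at ha' ⊢; omega
    · simp only [if_neg (Ne.symm h)] at *; omega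
  · rw [Finset.sum_add_distrib, hes, Finset.sum_ite_eq' (range (i+1)) t fun _ => 1,
      if_pos htm]
  · have h1 : ∏ s ∈ range (i+1), u s ^ (if s = t then 1 else 0) = u t := by
      refine (Finset.prod_eq_single_of_mem t htm
        (fun s _ hs => by rw [if_neg hs, pow_zero])).trans (by rw [if_pos rfl, pow_one])
    simp only [pow_add]
    rw [Finset.prod_mul_distrib, h1, mul_comm]

lemma MonSet.pow_self {u : ℕ → R} (i d : ℕ) : u i ^ d ∈ MonSet u i d d := by
  refine ⟨fun s => if s = i then d else 0, by simp, ?_, ?_⟩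
  · rw [Finset.sum_ite_eq' (range (i+1)) i fun _ => d, if_pos (self_mem_range_succ i)]
  · symm
    refine (Finset.prod_eq_single_of_mem i (self_mem_range_succ i)
      (fun s _ hs => by simp only [if_neg hs, pow_zero])).trans (by simp)

lemma key {u : ℕ → R} {i : ℕ} {y : ℕ → R}
    (hy : ∀ j, y j ∈ Submodule.span ℤ (u '' Set.Iio i)) :
    ∀ n, u i ^ (n+1) - u i * ∏ j ∈ range n, (u i + y j)
      ∈ Submodule.span ℤ (MonSet u i (n+1) n) := by
  intro n
  induction n with
  | zero => simp
  | succ n IH =>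
    rw [Finset.prod_range_succ]
    have hEq : u i ^ (n+1+1) - u i * ((∏ j ∈ range n, (u i + y j)) * (u i + y n))
        = u i * (u i ^ (n+1) - u i * ∏ j ∈ range n, (u i + y j))
          + y n * (u i ^ (n+1) - u i * ∏ j ∈ range n, (u i + y j))
          - u i ^ (n+1) * y n := by ring
    rw [hEq]
    refine sub_mem (add_mem ?_ ?_) ?_
    · refine Submodule.span_mono ?_
        (span_mul_mem (s := {u i}) (Submodule.subset_span rfl) IH)
      rw [Set.singleton_mul]
      rintro _ ⟨x, hx, rfl⟩
      exact MonSet.mul_u le_rfl (by simp) hx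
    · refine Submodule.span_mono ?_ (span_mul_mem (hy n) IH)
      rw [Set.mul_subset_iff]
      rintro _ ⟨t, ht, rfl⟩ x hx
      have ht' : t < i := ht
      exact MonSet.mul_u ht'.le (by simp only [if_neg (Nat.ne_of_lt ht')]; omega) hx
    · refine Submodule.span_mono ?_ (span_mul_mem
        (Submodule.subset_span (MonSet.pow_self i (n+1))) (hy n))
      rw [Set.mul_subset_iff]
      rintro x hx _ ⟨t, ht, rfl⟩
      rw [mul_comm]
      have ht' : t < i := ht
      exact MonSet.mul_u ht'.le (by simp only [if_neg (Nat.ne_of_lt ht')]; omega) hx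
end Aux

open Finset
open scoped Pointwise



/-- Vanishing lemma for generalized real Bott manifolds: if
`u i * ∏_{j < nn i} (u i + y i j) = 0` with each `y i j` in the additive
subgroup generated by the earlier `u t`, then any monomial
`u 0 ^ l 0 ⋯ u (k-1) ^ l (k-1)` of total degree `nn 0 + ⋯ + nn (k-1) + 1`
vanishes. -/
theorem stmt6 (R : Type*) [CommRing R] (m : ℕ) (hm : 1 ≤ m)
    (nn : ℕ → ℕ) (hn : ∀ i < m, 1 ≤ nn i)
    (u : ℕ → R) (y : ℕ → ℕ → R)
    (hy : ∀ i < m, ∀ j < nn i, y i j ∈ AddSubgroup.closure (u '' Set.Iio i))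
    (hu : ∀ i < m, u i * ∏ j ∈ Finset.range (nn i), (u i + y i j) = 0) :
    ∀ k, 1 ≤ k → k ≤ m → ∀ l : ℕ → ℕ,
      (∑ i ∈ Finset.range k, l i) = (∑ i ∈ Finset.range k, nn i) + 1 →
      ∏ i ∈ Finset.range k, u i ^ l i = 0 := by
  intro k hk1 hkm
  set B : ℕ := (∑ t ∈ range m, nn t) + 2 with hB
  suffices H : ∀ M : ℕ, ∀ l : ℕ → ℕ,
      (∑ i ∈ range k, l i) = (∑ i ∈ range k, nn i) + 1 →
      (∑ i ∈ range k, l i * B ^ i) ≤ M →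
      ∏ i ∈ range k, u i ^ l i = 0 by
    intro l hl
    exact H _ l hl le_rfl
  intro M
  induction M using Nat.strong_induction_on with
  | _ M IH =>
    intro l hl hM
    -- pigeonhole: some exponent exceeds nn i
    obtain ⟨i, hik, hil⟩ : ∃ i < k, nn i + 1 ≤ l i := by
      by_contra h
      push_neg at h
      have : ∑ i ∈ range k, l i ≤ ∑ i ∈ range k, nn i :=
        Finset.sum_le_sum fun i hi => by
          have := h i (mem_range.mp hi); omega
      omega
    have him : i < m := lt_of_lt_of_le hik hkm
    -- modified y, defined for all j
    set y' : ℕ → R := fun j => if j < nn i then y i j else 0 with hy'def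
    have hy' : ∀ j, y' j ∈ Submodule.span ℤ (u '' Set.Iio i) := by
      intro j
      simp only [hy'def]
      split
      · rename_i hj
        have hle : AddSubgroup.closure (u '' Set.Iio i)
            ≤ (Submodule.span ℤ (u '' Set.Iio i)).toAddSubgroup :=
          AddSubgroup.closure_le _ |>.mpr Submodule.subset_span
        exact hle (hy i him j hj)
      · exact zero_mem _
    have hprod : u i * ∏ j ∈ range (nn i), (u i + y' j) = 0 := by
      have hpe : ∏ j ∈ range (nn i), (u i + y' j) = ∏ j ∈ range (nn i), (u i + y i j) :=
        Finset.prod_congr rfl fun j hj => by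
          simp only [hy'def]
          rw [if_pos (mem_range.mp hj)]
      rw [hpe]
      exact hu i him
    have hkey : u i ^ (nn i + 1) ∈ Submodule.span ℤ (MonSet u i (nn i + 1) (nn i)) := by
      have := key hy' (nn i)
      rwa [hprod, sub_zero] at this
    -- factor the monomial
    set r : R := u i ^ (l i - (nn i + 1)) * ∏ t ∈ (range k).erase i, u t ^ l t with hrdef
    have hPr : ∏ t ∈ range k, u t ^ l t = r * u i ^ (nn i + 1) := by
      rw [← Finset.mul_prod_erase _ _ (mem_range.mpr hik), hrdef]
      rw [mul_right_comm, ← pow_add]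
      congr 2
      omega
    have hmem : ∏ t ∈ range k, u t ^ l t
        ∈ Submodule.span ℤ (({r} : Set R) * MonSet u i (nn i + 1) (nn i)) := by
      rw [hPr]
      exact span_mul_mem (Submodule.subset_span rfl) hkey
    -- every generator vanishes
    have hz : (({r} : Set R) * MonSet u i (nn i + 1) (nn i)) ⊆ {(0:R)} := by
      rintro _ ⟨r', hr', x, hx, rfl⟩
      rw [Set.mem_singleton_iff] at hr'
      subst hr'
      obtain ⟨e, hei, hes, rfl⟩ := hx
      set l' : ℕ → ℕ := fun t =>
        (if t < i + 1 then e t else 0) + (if t = i then l t - (nn i + 1) else l t) with hl'def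
      -- product identity
      have hsub : range (i+1) ⊆ range k := by
        intro t ht; rw [mem_range] at *; omega
      have hprodeq : ∏ t ∈ range k, u t ^ l' t
          = r * ∏ t ∈ range (i+1), u t ^ e t := by
        simp only [hl'def, pow_add]
        rw [Finset.prod_mul_distrib]
        have h1 : ∏ t ∈ range k, u t ^ (if t < i + 1 then e t else 0)
            = ∏ t ∈ range (i+1), u t ^ e t := by
          refine (Finset.prod_subset hsub ?_).symm.trans ?_
          · intro t _ ht
            rw [mem_range] at ht
            rw [if_neg ht, pow_zero]
          · exact Finset.prod_congr rfl fun t ht => by rw [if_pos (mem_range.mp ht)]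
        have h2 : ∏ t ∈ range k, u t ^ (if t = i then l t - (nn i + 1) else l t) = r := by
          rw [← Finset.mul_prod_erase _ _ (mem_range.mpr hik), if_pos rfl, hrdef]
          congr 1
          exact Finset.prod_congr rfl fun t ht => by
            rw [if_neg (Finset.ne_of_mem_erase ht)]
        rw [h1, h2, mul_comm]
      -- degree identity
      have hsum : ∑ t ∈ range k, l' t = (∑ t ∈ range k, nn t) + 1 := by
        simp only [hl'def]
        rw [Finset.sum_add_distrib]
        have h1 : ∑ t ∈ range k, (if t < i + 1 then e t else 0)
            = nn i + 1 := by
          rw [← hes]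
          refine (Finset.sum_subset hsub ?_).symm.trans ?_
          · intro t _ ht
            rw [mem_range] at ht
            rw [if_neg ht]
          · exact Finset.sum_congr rfl fun t ht => by rw [if_pos (mem_range.mp ht)]
        have h2 : ∑ t ∈ range k, (if t = i then l t - (nn i + 1) else l t)
            + (nn i + 1) = ∑ t ∈ range k, l t := by
          rw [← Finset.add_sum_erase _ _ (mem_range.mpr hik), if_pos rfl,
            ← Finset.add_sum_erase _ (fun t => l t) (mem_range.mpr hik)]
          have h3 : ∑ t ∈ (range k).erase i, (if t = i then l t - (nn i + 1) else l t)
              = ∑ t ∈ (range k).erase i, l t :=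
            Finset.sum_congr rfl fun t ht => by rw [if_neg (Finset.ne_of_mem_erase ht)]
          omega
        omega
      -- measure decrease
      have hmeas : ∑ t ∈ range k, l' t * B ^ t < ∑ t ∈ range k, l t * B ^ t := by
        simp only [hl'def]
        have hexp : ∑ t ∈ range (i+1), e t * B ^ t < (nn i + 1) * B ^ i := by
          rw [Finset.sum_range_succ]
          rcases Nat.eq_zero_or_pos i with rfl | hipos
          · simp only [Finset.range_zero, Finset.sum_empty, pow_zero, mul_one, zero_add, add_zero]
            omega
          · obtain ⟨s, rfl⟩ : ∃ s, i = s + 1 := ⟨i - 1, by omega⟩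
            have hb1 : ∑ t ∈ range (s+1), e t * B ^ t
                ≤ (∑ t ∈ range (s+1), e t) * B ^ s := by
              rw [Finset.sum_mul]
              refine Finset.sum_le_sum fun t ht => ?_
              exact Nat.mul_le_mul_left _ (Nat.pow_le_pow_right (by omega)
                (by rw [mem_range] at ht; omega))
            have hb2 : ∑ t ∈ range (s+1), e t ≤ nn (s+1) + 1 := by
              rw [Finset.sum_range_succ] at hes; omega
            have hb3 : nn (s+1) + 1 < B := by
              have := Finset.single_le_sum (f := nn)
                (fun t _ => Nat.zero_le _) (mem_range.mpr him)
              omega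
            have hb4 : (nn (s+1) + 1) * B ^ s < B ^ (s+1) := by
              rw [pow_succ]
              have hpos : 0 < B ^ s := pow_pos (by omega) s
              nlinarith
            have h5 : e (s+1) * B ^ (s+1) ≤ nn (s+1) * B ^ (s+1) :=
              Nat.mul_le_mul_right _ hei
            have hb1' : ∑ t ∈ range (s+1), e t * B ^ t ≤ (nn (s+1) + 1) * B ^ s :=
              hb1.trans (Nat.mul_le_mul_right _ hb2)
            have hsplit : (nn (s+1) + 1) * B ^ (s+1)
                = nn (s+1) * B ^ (s+1) + B ^ (s+1) := by ring
            omega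
        have h1 : ∑ t ∈ range k, ((if t < i + 1 then e t else 0)
              + (if t = i then l t - (nn i + 1) else l t)) * B ^ t
            = (∑ t ∈ range (i+1), e t * B ^ t)
              + ∑ t ∈ range k, (if t = i then l t - (nn i + 1) else l t) * B ^ t := by
          simp only [add_mul]
          rw [Finset.sum_add_distrib]
          congr 1
          refine (Finset.sum_subset hsub ?_).symm.trans ?_
          · intro t _ ht
            rw [mem_range] at ht
            rw [if_neg ht, zero_mul]
          · exact Finset.sum_congr rfl fun t ht => by rw [if_pos (mem_range.mp ht)]
        have h2 : ∑ t ∈ range k, (if t = i then l t - (nn i + 1) else l t) * B ^ t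
              + (nn i + 1) * B ^ i = ∑ t ∈ range k, l t * B ^ t := by
          rw [← Finset.add_sum_erase _ _ (mem_range.mpr hik), if_pos rfl,
            ← Finset.add_sum_erase _ (fun t => l t * B ^ t) (mem_range.mpr hik)]
          have h3 : ∑ t ∈ (range k).erase i,
                (if t = i then l t - (nn i + 1) else l t) * B ^ t
              = ∑ t ∈ (range k).erase i, l t * B ^ t :=
            Finset.sum_congr rfl fun t ht => by rw [if_neg (Finset.ne_of_mem_erase ht)]
          rw [h3]
          have h4 : (l i - (nn i + 1)) * B ^ i + (nn i + 1) * B ^ i = l i * B ^ i := by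
            rw [← Nat.add_mul]
            congr 1
            omega
          omega
        omega
      rw [Set.mem_singleton_iff]
      show r * ∏ t ∈ range (i+1), u t ^ e t = 0
      rw [← hprodeq]
      exact IH _ (lt_of_lt_of_le hmeas hM) l' hsum le_rfl
    have : Submodule.span ℤ (({r} : Set R) * MonSet u i (nn i + 1) (nn i)) ≤ ⊥ := by
      rw [← Submodule.span_zero_singleton (R := ℤ) (M := R)]
      exact Submodule.span_mono hz
    simpa using this hmem
end

section
/- Let k ≥ 1 and set l = 2^k − 1. Let R be a commutative ring in which 2 = 0, and let u, y_1,…,y_l ∈ R. For 0 ≤ i ≤ l let σ_i denote the i-th elementary symmetric polynomial in y_1,…,y_l (with σ_0 = 1). Suppose σ_i = 0 for every i with 1 ≤ i ≤ l such that l + 1 − i is not of the form 2^j for some 0 ≤ j ≤ k. Then (1+u)·∏_{j=1}^{l}(1 + u + y_j) = ∑_{j=0}^{k} (1 + u^{2^j}) · σ_{l+1−2^j}. -/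
/-- In a commutative ring of characteristic 2, with `l = 2^k - 1`, if the
elementary symmetric polynomials `σ i` of `y 1, …, y l` vanish for every
`1 ≤ i ≤ l` such that `2 ^ k - 1 + 1 - i` is not a power `2^j` with `j ≤ k`, then
`(1+u) ∏ (1+u+y j) = ∑_{j=0}^{k} (1 + u^{2^j}) σ_{l+1-2^j}`. -/
theorem stmt7 (k : ℕ) (hk : 1 ≤ k) (R : Type*) [CommRing R] (h2 : (2 : R) = 0)
    (u : R) (y : Fin (2 ^ k - 1) → R) (σ : ℕ → R)
    (hσdef : ∀ i, σ i =
      ∑ t ∈ (Finset.univ : Finset (Fin (2 ^ k - 1))).powersetCard i, ∏ j ∈ t, y j)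
    (hσ : ∀ i, 1 ≤ i → i ≤ 2 ^ k - 1 → (∀ j ≤ k, 2 ^ k - i ≠ 2 ^ j) → σ i = 0) :
    (1 + u) * ∏ j, (1 + u + y j) =
      ∑ j ∈ Finset.range (k + 1), (1 + u ^ 2 ^ j) * σ (2 ^ k - 2 ^ j) := by
  classical
  have sq : ∀ a b : R, (a + b) ^ 2 = a ^ 2 + b ^ 2 := by
    intro a b
    have h : (a + b) ^ 2 = a ^ 2 + b ^ 2 + 2 * (a * b) := by ring
    rw [h, h2, zero_mul, add_zero]
  have freshman : ∀ n : ℕ, (1 + u) ^ 2 ^ n = 1 + u ^ 2 ^ n := by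
    intro n
    induction n with
    | zero => simp
    | succ n ih =>
      rw [pow_succ, pow_mul, ih, sq, one_pow, ← pow_mul, ← pow_succ]
  have hl1 : 2 ^ k - 1 + 1 = 2 ^ k := Nat.sub_add_cancel (Nat.one_le_two_pow)
  -- expand the product
  have hprod : ∏ j, (1 + u + y j) = ∑ i ∈ Finset.range (2 ^ k - 1 + 1), σ i * (1 + u) ^ (2 ^ k - 1 - i) := by
    have h1 : ∏ j, (1 + u + y j) = ∏ j, (y j + (1 + u)) := by
      refine Finset.prod_congr rfl fun j _ => by ring
    rw [h1, Finset.prod_add, Finset.powerset_card_disjiUnion]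
    erw [Finset.sum_disjiUnion]
    rw [Finset.card_univ, Fintype.card_fin]
    refine Finset.sum_congr rfl fun i hi => ?_
    rw [hσdef i, Finset.sum_mul]
    refine Finset.sum_congr rfl fun t ht => ?_
    have htc : t.card = i := (Finset.mem_powersetCard.mp ht).2
    rw [Finset.prod_const, Finset.card_sdiff_of_subset (Finset.subset_univ t),
      Finset.card_univ, Fintype.card_fin, htc]
  rw [hprod, Finset.mul_sum]
  have hstep : ∀ i ∈ Finset.range (2 ^ k - 1 + 1),
      (1 + u) * (σ i * (1 + u) ^ (2 ^ k - 1 - i)) = σ i * (1 + u) ^ (2 ^ k - i) := by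
    intro i hi
    rw [Finset.mem_range] at hi
    have : 2 ^ k - i = (2 ^ k - 1 - i) + 1 := by omega
    rw [this, pow_succ]
    ring
  rw [Finset.sum_congr rfl hstep, hl1]
  -- reduce to the image of j ↦ 2^k - 2^j
  set S : Finset ℕ := (Finset.range (k + 1)).image (fun j => 2 ^ k - 2 ^ j) with hS
  have hpow_le : ∀ j ≤ k, 2 ^ j ≤ 2 ^ k := fun j hj => Nat.pow_le_pow_right (by norm_num) hj
  have hsub : S ⊆ Finset.range (2 ^ k) := by
    intro i hi
    rw [hS, Finset.mem_image] at hi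
    obtain ⟨j, hj, rfl⟩ := hi
    rw [Finset.mem_range] at hj ⊢
    have h1 : 1 ≤ 2 ^ j := Nat.one_le_two_pow
    have h2' := hpow_le j (by omega)
    omega
  have hzero : ∀ i ∈ Finset.range (2 ^ k), i ∉ S → σ i * (1 + u) ^ (2 ^ k - i) = 0 := by
    intro i hi hiS
    rw [Finset.mem_range] at hi
    have hi1 : 1 ≤ i := by
      rcases Nat.eq_zero_or_pos i with h0 | h0
      · exfalso; apply hiS
        rw [hS, Finset.mem_image]
        exact ⟨k, Finset.self_mem_range_succ k, by omega⟩
      · exact h0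
    have : σ i = 0 := by
      refine hσ i hi1 (by omega) fun j hj hji => ?_
      apply hiS
      rw [hS, Finset.mem_image]
      have := hpow_le j hj
      exact ⟨j, Finset.mem_range.mpr (by omega), by omega⟩
    rw [this, zero_mul]
  rw [← Finset.sum_subset hsub hzero, hS,
    Finset.sum_image (fun j1 h1 j2 h2 heq => by
      rw [Finset.mem_coe, Finset.mem_range] at h1 h2
      have e1 := hpow_le j1 (by omega)
      have e2 := hpow_le j2 (by omega)
      have : 2 ^ j1 = 2 ^ j2 := by omega
      exact Nat.pow_right_injective (le_refl 2) this)]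
  refine Finset.sum_congr rfl fun j hj => ?_
  rw [Finset.mem_range] at hj
  have hle := hpow_le j (by omega)
  have : 2 ^ k - (2 ^ k - 2 ^ j) = 2 ^ j := Nat.sub_sub_self hle
  rw [this, freshman j, mul_comm]
end

section
/- In the polynomial ring (Z/2Z)[u_1, u_2], the element u_2^4 (u_1 + u_2)^2 does not belong to the ideal generated by u_1^4 and u_2 (u_1 + u_2)^3. -/
open MvPolynomial

private lemma aux_le (a b c d : ℕ) (h1 : a ≤ c) (h2 : b ≤ d) :
    (Finsupp.single 0 a + Finsupp.single 1 b : Fin 2 →₀ ℕ) ≤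
      Finsupp.single 0 c + Finsupp.single 1 d := by
  rw [Finsupp.le_def]; intro i; fin_cases i <;> simpa

private lemma aux_sub (a b c d : ℕ) :
    ((Finsupp.single 0 c + Finsupp.single 1 d : Fin 2 →₀ ℕ) -
      (Finsupp.single 0 a + Finsupp.single 1 b)) =
      Finsupp.single 0 (c - a) + Finsupp.single 1 (d - b) := by
  ext i; fin_cases i <;> simp

private lemma aux_not_le_fst (a b c d : ℕ) (h : c < a) :
    ¬ (Finsupp.single 0 a + Finsupp.single 1 b : Fin 2 →₀ ℕ) ≤
      Finsupp.single 0 c + Finsupp.single 1 d := by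
  rw [Finsupp.le_def]; intro hle
  have := hle 0; simp at this; omega

private lemma aux_not_le_snd (a b c d : ℕ) (h : d < b) :
    ¬ (Finsupp.single 0 a + Finsupp.single 1 b : Fin 2 →₀ ℕ) ≤
      Finsupp.single 0 c + Finsupp.single 1 d := by
  rw [Finsupp.le_def]; intro hle
  have := hle 1; simp at this; omega

private lemma aux_ne (a b c d : ℕ) (h : a ≠ c ∨ b ≠ d) :
    (Finsupp.single 0 a + Finsupp.single 1 b : Fin 2 →₀ ℕ) ≠
      Finsupp.single 0 c + Finsupp.single 1 d := by
  intro he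
  have h0 := Finsupp.ext_iff.mp he 0
  have h1 := Finsupp.ext_iff.mp he 1
  simp at h0 h1
  tauto

/-- monomial `u₁^i u₂^j` in `(Z/2Z)[u₁,u₂]` -/
private noncomputable def M (i j : ℕ) : MvPolynomial (Fin 2) (ZMod 2) :=
  monomial (Finsupp.single 0 i + Finsupp.single 1 j) 1

private lemma hM (i j : ℕ) : (X 0 : MvPolynomial (Fin 2) (ZMod 2)) ^ i * X 1 ^ j = M i j := by
  rw [M, X_pow_eq_monomial, X_pow_eq_monomial, monomial_mul, mul_one]

/-- In `(Z/2Z)[u₁, u₂]`, the element `u₂^4 (u₁+u₂)^2` does not belong to the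
ideal generated by `u₁^4` and `u₂ (u₁+u₂)^3`. -/
theorem stmt8 :
    (X 1 ^ 4 * (X 0 + X 1) ^ 2 : MvPolynomial (Fin 2) (ZMod 2)) ∉
      Ideal.span {(X 0 ^ 4 : MvPolynomial (Fin 2) (ZMod 2)),
        X 1 * (X 0 + X 1) ^ 3} := by
  intro h
  rw [Ideal.mem_span_pair] at h
  obtain ⟨a, b, hab⟩ := h
  have h2 : (2 : MvPolynomial (Fin 2) (ZMod 2)) = 0 := by
    have := CharP.cast_eq_zero (MvPolynomial (Fin 2) (ZMod 2)) 2
    simpa using this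
  have h3 : (3 : MvPolynomial (Fin 2) (ZMod 2)) = 1 := by
    rw [show (3 : MvPolynomial (Fin 2) (ZMod 2)) = 2 + 1 by norm_num, h2, zero_add]
  have hg1 : (X 0 ^ 4 : MvPolynomial (Fin 2) (ZMod 2)) = M 4 0 := by
    rw [← hM 4 0]; ring
  have hg2 : (X 1 * (X 0 + X 1) ^ 3 : MvPolynomial (Fin 2) (ZMod 2)) =
      M 3 1 + M 2 2 + M 1 3 + M 0 4 := by
    have e : (X 1 * (X 0 + X 1) ^ 3 : MvPolynomial (Fin 2) (ZMod 2)) =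
        X 0 ^ 3 * X 1 ^ 1 + 3 * (X 0 ^ 2 * X 1 ^ 2) + 3 * (X 0 ^ 1 * X 1 ^ 3)
          + X 0 ^ 0 * X 1 ^ 4 := by ring
    rw [e, h3, one_mul, one_mul, hM, hM, hM, hM]
  have hp : (X 1 ^ 4 * (X 0 + X 1) ^ 2 : MvPolynomial (Fin 2) (ZMod 2)) = M 2 4 + M 0 6 := by
    have e : (X 1 ^ 4 * (X 0 + X 1) ^ 2 : MvPolynomial (Fin 2) (ZMod 2)) =
        X 0 ^ 2 * X 1 ^ 4 + 2 * (X 0 ^ 1 * X 1 ^ 5) + X 0 ^ 0 * X 1 ^ 6 := by ring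
    rw [e, h2, zero_mul, add_zero, hM, hM]
  rw [hg1, hg2, hp] at hab
  have key : ∀ i j : ℕ, coeff (Finsupp.single 0 i + Finsupp.single 1 j)
      (a * M 4 0 + b * (M 3 1 + M 2 2 + M 1 3 + M 0 4)) =
      coeff (Finsupp.single 0 i + Finsupp.single 1 j) (M 2 4 + M 0 6) := by
    intro i j; rw [hab]
  have e1 := key 3 3
  have e2 := key 2 4
  simp only [M, mul_add, coeff_add, coeff_mul_monomial', coeff_monomial] at e1 e2
  rw [if_neg (aux_not_le_fst 4 0 3 3 (by norm_num)),
      if_pos (aux_le 3 1 3 3 (by norm_num) (by norm_num)),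
      if_pos (aux_le 2 2 3 3 (by norm_num) (by norm_num)),
      if_pos (aux_le 1 3 3 3 (by norm_num) (by norm_num)),
      if_neg (aux_not_le_snd 0 4 3 3 (by norm_num)),
      if_neg (aux_ne 2 4 3 3 (by norm_num)),
      if_neg (aux_ne 0 6 3 3 (by norm_num)),
      aux_sub 3 1 3 3, aux_sub 2 2 3 3, aux_sub 1 3 3 3] at e1
  rw [if_neg (aux_not_le_fst 4 0 2 4 (by norm_num)),
      if_neg (aux_not_le_fst 3 1 2 4 (by norm_num)),
      if_pos (aux_le 2 2 2 4 (by norm_num) (by norm_num)),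
      if_pos (aux_le 1 3 2 4 (by norm_num) (by norm_num)),
      if_pos (aux_le 0 4 2 4 (by norm_num) (by norm_num)),
      if_pos trivial,
      if_neg (aux_ne 0 6 2 4 (by norm_num)),
      aux_sub 2 2 2 4, aux_sub 1 3 2 4, aux_sub 0 4 2 4] at e2
  norm_num at e1 e2
  rw [e1] at e2
  exact one_ne_zero e2.symm
end

section
/- Let n ≥ 2 be an even integer and let b_1,…,b_n be nonzero integers with b_1 b_2 ⋯ b_n = 2. In the polynomial ring Z[u_1,…,u_n], let I be the ideal generated by the n elements u_1(u_1 + b_n u_n) and u_i(u_i + b_{i−1} u_{i−1}) for 2 ≤ i ≤ n. Then there exists a nonzero integer c such that ∑_{j=1}^{n} (b_j u_j)^n − c · u_1 u_2 ⋯ u_n ∈ I. -/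
open MvPolynomial
open scoped Fin.NatCast Fin.CommRing

private lemma natAbs_finset_prod {ι : Type*} (s : Finset ι) (f : ι → ℤ) :
    (∏ i ∈ s, f i).natAbs = ∏ i ∈ s, (f i).natAbs :=
  map_prod Int.natAbsHom f s

set_option maxHeartbeats 1600000 in
/-- For `n ≥ 2` even and nonzero integers `b 0, …, b (n-1)` with product 2,
in `ℤ[u₀,…,u_{n-1}]` the power sum `∑ (b j * u j)^n` is congruent, modulo the
ideal generated by the elements `u i (u i + b (i-1) * u (i-1))` (indices
cyclic), to a nonzero integer multiple of `u₀ u₁ ⋯ u_{n-1}`. -/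
theorem stmt9 (n : ℕ) (hn : 2 ≤ n) (hne : Even n) (b : Fin n → ℤ)
    (hb : ∀ i, b i ≠ 0) (hprod : ∏ i, b i = 2) :
    ∃ c : ℤ, c ≠ 0 ∧
      (∑ j, (C (b j) * X j) ^ n) - C c * ∏ j, X j ∈
        Ideal.span (Set.range fun i : Fin n =>
          (X i * (X i + C (b (i - ⟨1, by omega⟩)) * X (i - ⟨1, by omega⟩)) :
            MvPolynomial (Fin n) ℤ)) := by
  haveI : NeZero n := ⟨by omega⟩
  classical
  have hone' : ∀ h : 1 < n, (⟨1, h⟩ : Fin n) = 1 := by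
    intro h
    ext
    simp [Fin.val_one', Nat.mod_eq_of_lt h]
  have hn1 : ((n - 1 : ℕ) : Fin n) = -1 := by
    have h1 : ((n - 1 : ℕ) : Fin n) + 1 = 0 := by
      have h2 : ((n - 1 : ℕ) : Fin n) + 1 = ((n - 1 + 1 : ℕ) : Fin n) := by push_cast; ring
      have h3 : n - 1 + 1 = n := by omega
      rw [h2, h3, Fin.natCast_self]
    exact eq_neg_of_add_eq_zero_left h1
  ------------------------------------------------------------------
  -- Part 1 : arithmetic of the coefficients
  ------------------------------------------------------------------
  have haprod : ∏ i, (b i).natAbs = 2 := by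
    have h := congrArg Int.natAbs hprod
    rwa [natAbs_finset_prod] at h
  have hadvd : ∀ i, (b i).natAbs = 1 ∨ (b i).natAbs = 2 := by
    intro i
    have h1 : (b i).natAbs ∣ 2 :=
      haprod ▸ Finset.dvd_prod_of_mem (fun i => (b i).natAbs) (Finset.mem_univ i)
    exact (Nat.dvd_prime Nat.prime_two).mp h1
  -- the unique index with |b| = 2
  obtain ⟨s0, has0, hane⟩ :
      ∃ s0 : Fin n, (b s0).natAbs = 2 ∧ ∀ i, i ≠ s0 → (b i).natAbs = 1 := by
    set S : Finset (Fin n) := Finset.univ.filter (fun i => (b i).natAbs = 2) with hS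
    have h1 : ∏ i ∈ S, (b i).natAbs = 2 ^ S.card :=
      Finset.prod_eq_pow_card (fun i hi => (Finset.mem_filter.mp hi).2)
    have h2 : ∏ i ∈ Finset.univ.filter (fun i => ¬ (b i).natAbs = 2), (b i).natAbs = 1 :=
      Finset.prod_eq_one (fun i hi => (hadvd i).resolve_right (Finset.mem_filter.mp hi).2)
    have h3 := Finset.prod_filter_mul_prod_filter_not Finset.univ
      (fun i => (b i).natAbs = 2) (fun i => (b i).natAbs)
    rw [← hS, h1, h2, mul_one, haprod] at h3
    have hcard : S.card = 1 := by
      have := Nat.pow_right_injective (le_refl 2) (h3.trans (pow_one 2).symm)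
      exact this
    obtain ⟨s0, hs0⟩ := Finset.card_eq_one.mp hcard
    refine ⟨s0, ?_, ?_⟩
    · have : s0 ∈ S := by rw [hs0]; exact Finset.mem_singleton_self s0
      exact (Finset.mem_filter.mp this).2
    · intro i hi
      refine (hadvd i).resolve_right fun h2' => hi ?_
      have : i ∈ S := Finset.mem_filter.mpr ⟨Finset.mem_univ i, h2'⟩
      rw [hs0] at this
      exact Finset.mem_singleton.mp this
  -- the coefficient attached to each `u i ^ n`
  set co : Fin n → ℤ :=
    fun i => ∏ j ∈ Finset.range (n - 1), (-(b (i - ((j + 1 : ℕ) : Fin n)))) ^ (n - 1 - j)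
    with hco
  set c : ℤ := ∑ i, b i ^ n * co i with hc
  have hbs0 : b s0 ^ 2 = 4 := by
    rcases Int.natAbs_eq_iff.mp has0 with h | h <;> rw [h] <;> norm_num
  have hb4 : ∀ e : ℕ, 2 ≤ e → (4 : ℤ) ∣ (-(b s0)) ^ e := by
    intro e he
    have h1 : (-(b s0)) ^ 2 ∣ (-(b s0)) ^ e := pow_dvd_pow _ he
    rwa [neg_sq, hbs0] at h1
  have hs0ne : s0 - 1 ≠ s0 := by
    intro h
    have h1 : (1 : Fin n) = 0 := sub_eq_self.mp h
    have h2 := congrArg Fin.val h1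
    simp [Fin.val_one', Nat.mod_eq_of_lt (show 1 < n by omega)] at h2
  -- every term except the one at `s0 - 1` is divisible by 4
  have claim1 : ∀ i, i ≠ s0 - 1 → (4 : ℤ) ∣ b i ^ n * co i := by
    intro i hi
    by_cases his : i = s0
    · subst his
      have h1 : b i ^ 2 ∣ b i ^ n := pow_dvd_pow _ hn
      rw [hbs0] at h1
      exact h1.mul_right _
    · set d : ℕ := (i - s0).val with hd
      have hdn : d < n := (i - s0).isLt
      have hd1 : 1 ≤ d := by
        rcases Nat.eq_zero_or_pos d with h | h
        · exfalso
          apply his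
          have h1 : i - s0 = 0 := by
            apply Fin.ext
            simpa [← hd] using h
          exact sub_eq_zero.mp h1
        · exact h
      have hv : ((d : ℕ) : Fin n) = i - s0 := by
        rw [hd]; exact Fin.cast_val_eq_self _
      have hd2 : d ≤ n - 2 := by
        by_contra hcon
        have hdd : d = n - 1 := by omega
        apply hi
        have h1 : i - s0 = -1 := by rw [← hv, hdd, hn1]
        have h2 : i = -1 + s0 := sub_eq_iff_eq_add.mp h1
        rw [h2]; abel
      have hj0mem : d - 1 ∈ Finset.range (n - 1) := Finset.mem_range.mpr (by omega)
      have hidx : i - ((d - 1 + 1 : ℕ) : Fin n) = s0 := by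
        have h1 : d - 1 + 1 = d := by omega
        rw [h1, hv, sub_sub_cancel]
      have hdvd : (4 : ℤ) ∣ co i := by
        have hfac : (-(b (i - ((d - 1 + 1 : ℕ) : Fin n)))) ^ (n - 1 - (d - 1)) ∣ co i :=
          Finset.dvd_prod_of_mem _ hj0mem
        rw [hidx] at hfac
        exact dvd_trans (hb4 _ (by omega)) hfac
      exact hdvd.mul_left _
  -- the term at `s0 - 1` has absolute value 2
  have claim2 : (b (s0 - 1) ^ n * co (s0 - 1)).natAbs = 2 := by
    rw [Int.natAbs_mul, Int.natAbs_pow, hane _ hs0ne, one_pow, one_mul]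
    have h5 : (co (s0 - 1)).natAbs =
        ∏ j ∈ Finset.range (n - 1),
          ((b (s0 - 1 - ((j + 1 : ℕ) : Fin n))).natAbs) ^ (n - 1 - j) := by
      simp only [hco, natAbs_finset_prod, Int.natAbs_pow, Int.natAbs_neg]
    rw [h5]
    rw [Finset.prod_eq_single (n - 2)]
    · have e1 : n - 2 + 1 = n - 1 := by omega
      have e2 : s0 - 1 - ((n - 2 + 1 : ℕ) : Fin n) = s0 := by
        rw [e1, hn1]; abel
      rw [e2, has0]
      have e3 : n - 1 - (n - 2) = 1 := by omega
      rw [e3, pow_one]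
    · intro j hj hjne
      have hjlt := Finset.mem_range.mp hj
      have hidx : s0 - 1 - ((j + 1 : ℕ) : Fin n) ≠ s0 := by
        intro heq
        have h' : (1 : Fin n) + ((j + 1 : ℕ) : Fin n) = ((j + 2 : ℕ) : Fin n) := by
          push_cast; ring
        rw [sub_sub, h'] at heq
        have h0 : ((j + 2 : ℕ) : Fin n) = 0 := sub_eq_self.mp heq
        have hdv : n ∣ j + 2 := Fin.natCast_eq_zero.mp h0
        have := Nat.le_of_dvd (by omega) hdv
        omega
      rw [hane _ hidx, one_pow]
    · intro h
      exact absurd (Finset.mem_range.mpr (by omega)) h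
  -- hence the total coefficient is not divisible by 4, in particular nonzero
  have hc4 : ¬ (4 : ℤ) ∣ c := by
    intro h4
    have hrest : (4 : ℤ) ∣ ∑ i ∈ Finset.univ.erase (s0 - 1), b i ^ n * co i :=
      Finset.dvd_sum fun i hi => claim1 i (Finset.ne_of_mem_erase hi)
    have hsum : c = b (s0 - 1) ^ n * co (s0 - 1) +
        ∑ i ∈ Finset.univ.erase (s0 - 1), b i ^ n * co i := by
      rw [hc]
      exact (Finset.add_sum_erase Finset.univ _ (Finset.mem_univ _)).symm
    rw [hsum] at h4
    have h3 : (4 : ℤ) ∣ b (s0 - 1) ^ n * co (s0 - 1) := by simpa using h4.sub hrest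
    have h6 := Int.natAbs_dvd_natAbs.mpr h3
    rw [claim2] at h6
    norm_num at h6
  have hc0 : c ≠ 0 := fun h => hc4 (h ▸ dvd_zero 4)
  ------------------------------------------------------------------
  -- Part 2 : the computation in the quotient ring
  ------------------------------------------------------------------
  have key : ∀ J : Ideal (MvPolynomial (Fin n) ℤ),
      (∀ i : Fin n, (X i * (X i + C (b (i - 1)) * X (i - 1)) : MvPolynomial (Fin n) ℤ) ∈ J) →
      Ideal.Quotient.mk J (∑ j, (C (b j) * X j) ^ n) =
        Ideal.Quotient.mk J (C c * ∏ j, X j) := by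
    intro J hJ
    set π : MvPolynomial (Fin n) ℤ →+* _ := Ideal.Quotient.mk J with hπ
    set φ : ℤ →+* _ := π.comp (C : ℤ →+* MvPolynomial (Fin n) ℤ) with hφ
    have hφa : ∀ t : ℤ, φ t = π (C t) := fun t => rfl
    have rel : ∀ i : Fin n,
        π (X i) ^ 2 = -(φ (b (i - 1)) * (π (X (i - 1)) * π (X i))) := by
      intro i
      have h0 : π (X i * (X i + C (b (i - 1)) * X (i - 1))) = 0 :=
        Ideal.Quotient.eq_zero_iff_mem.mpr (hJ i)
      rw [map_mul, map_add, map_mul] at h0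
      rw [hφa]
      linear_combination h0
    have lemA : ∀ (m : ℕ) (i : Fin n),
        π (X i) ^ (m + 1) =
          φ ((-(b (i - 1))) ^ m) * (π (X (i - 1)) ^ m * π (X i)) := by
      intro m
      induction m with
      | zero => intro i; simp
      | succ m ih =>
        intro i
        calc π (X i) ^ (m + 1 + 1)
            = π (X i) ^ (m + 1) * π (X i) := by ring
          _ = φ ((-(b (i - 1))) ^ m) * (π (X (i - 1)) ^ m * π (X i)) * π (X i) := by
              rw [ih i]
          _ = φ ((-(b (i - 1))) ^ m) * π (X (i - 1)) ^ m * π (X i) ^ 2 := by ring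
          _ = φ ((-(b (i - 1))) ^ m) * π (X (i - 1)) ^ m *
                (-(φ (b (i - 1)) * (π (X (i - 1)) * π (X i)))) := by rw [rel i]
          _ = φ ((-(b (i - 1))) ^ (m + 1)) * (π (X (i - 1)) ^ (m + 1) * π (X i)) := by
              rw [map_pow, map_pow, map_neg]
              ring
    have lemB : ∀ k : ℕ, k ≤ n - 1 → ∀ i : Fin n,
        π (X i) ^ n =
          φ (∏ j ∈ Finset.range k, (-(b (i - ((j + 1 : ℕ) : Fin n)))) ^ (n - 1 - j)) *
            (π (X (i - (k : Fin n))) ^ (n - k) *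
              ∏ j ∈ Finset.range k, π (X (i - ((j : ℕ) : Fin n)))) := by
      intro k
      induction k with
      | zero =>
        intro _ i
        simp
      | succ k ih =>
        intro hk i
        have hk' : k ≤ n - 1 := by omega
        set m : ℕ := n - k - 1 with hm
        have e1 : n - k = m + 1 := by omega
        have e2 : n - 1 - k = m := by omega
        have e3 : n - (k + 1) = m := by omega
        have e4 : ((k + 1 : ℕ) : Fin n) = ((k : ℕ) : Fin n) + 1 := by push_cast; ring
        have e5 : i - ((k : ℕ) : Fin n) - 1 = i - ((k + 1 : ℕ) : Fin n) := by
          rw [e4, sub_sub]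
        rw [ih hk' i, Finset.prod_range_succ, Finset.prod_range_succ, e1, e2, e3,
          lemA m (i - ((k : ℕ) : Fin n)), e5, map_mul]
        ring
    have final : ∀ i : Fin n,
        π (X i) ^ n = φ (co i) * ∏ t, π (X t) := by
      intro i
      have h1 := lemB (n - 1) le_rfl i
      have e1 : n - (n - 1) = 1 := by omega
      rw [e1, pow_one, hn1] at h1
      have h2 : π (X (i - (-1 : Fin n))) * ∏ j ∈ Finset.range (n - 1), π (X (i - ((j : ℕ) : Fin n)))
          = ∏ j ∈ Finset.range n, π (X (i - ((j : ℕ) : Fin n))) := by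
        rw [show Finset.range n = Finset.range ((n - 1) + 1) from by rw [Nat.sub_add_cancel (by omega)],
          Finset.prod_range_succ, hn1]
        ring
      have hcoi : co i =
          ∏ j ∈ Finset.range (n - 1), (-(b (i - ((j + 1 : ℕ) : Fin n)))) ^ (n - 1 - j) := rfl
      rw [← hcoi] at h1
      rw [h1, h2]
      congr 1
      have h3 : ∏ j ∈ Finset.range n, π (X (i - ((j : ℕ) : Fin n)))
          = ∏ t : Fin n, π (X (i - t)) := by
        rw [← Fin.prod_univ_eq_prod_range (fun j => π (X (i - ((j : ℕ) : Fin n)))) n]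
        exact Finset.prod_congr rfl fun t _ => by rw [Fin.cast_val_eq_self]
      rw [h3]
      exact Equiv.prod_comp (Equiv.subLeft i) (fun t => π (X t))
    calc π (∑ j, (C (b j) * X j) ^ n)
        = ∑ j, φ (b j ^ n * co j) * ∏ t, π (X t) := by
          rw [map_sum]
          refine Finset.sum_congr rfl fun j _ => ?_
          rw [map_pow, map_mul, mul_pow, final j, map_mul, map_pow]
          simp only [hφa]
          ring
      _ = φ c * ∏ t, π (X t) := by rw [← Finset.sum_mul, hc, map_sum]
      _ = π (C c * ∏ j, X j) := by rw [map_mul, map_prod, hφa]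
  exact ⟨c, hc0, Ideal.Quotient.eq.mp
    (key _ fun i => Ideal.subset_span ⟨i, by simp only [hone']⟩)⟩
end

section
/- Let R be a commutative ring, let m ≥ 1, let n_1,…,n_m be positive integers with n_1 + ⋯ + n_m = n, and let u_1,…,u_m ∈ R. Suppose that for each i with 1 ≤ i ≤ m there are elements y^{(i)}_1,…,y^{(i)}_{n_i} ∈ R, each lying in the additive subgroup of R generated by u_1,…,u_{i−1}, such that u_i · ∏_{j=1}^{n_i} (u_i + y^{(i)}_j) = 0. Then every monomial u_1^{l_1} u_2^{l_2} ⋯ u_m^{l_m} with l_1 + ⋯ + l_m ≥ n + 1 is zero; consequently, for any element z of the additive subgroup of R generated by u_1,…,u_m, every monomial z^{l_0} u_1^{l_1} ⋯ u_m^{l_m} with l_0 + l_1 + ⋯ + l_m = n + 1 is zero. -/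
open Finset

namespace Stmt11Aux

variable {R : Type*} [CommRing R]

/-- The ℤ-span of monomials in `u 0, …, u (k-1)` of total degree `≥ D`. -/
def J (u : ℕ → R) (k D : ℕ) : Submodule ℤ R :=
  Submodule.span ℤ
    { x | ∃ l : ℕ → ℕ, D ≤ ∑ i ∈ range k, l i ∧ x = ∏ i ∈ range k, u i ^ l i }

lemma mem_J (u : ℕ → R) {k D : ℕ} (l : ℕ → ℕ) (hl : D ≤ ∑ i ∈ range k, l i) :
    (∏ i ∈ range k, u i ^ l i) ∈ J u k D :=
  Submodule.subset_span ⟨l, hl, rfl⟩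

lemma J_mono (u : ℕ → R) (k : ℕ) {D D' : ℕ} (h : D ≤ D') : J u k D' ≤ J u k D :=
  Submodule.span_mono fun x ⟨l, hl, hx⟩ => ⟨l, h.trans hl, hx⟩

lemma mul_u_mem (u : ℕ → R) {k D t : ℕ} (ht : t < k) {x : R} (hx : x ∈ J u k D) :
    u t * x ∈ J u k (D + 1) := by
  induction hx using Submodule.span_induction with
  | mem w hw =>
    obtain ⟨l, hl, rfl⟩ := hw
    have htm : t ∈ range k := mem_range.mpr ht
    have h2 : ∏ i ∈ (range k).erase t, u i ^ (Function.update l t (l t + 1)) i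
        = ∏ i ∈ (range k).erase t, u i ^ l i :=
      Finset.prod_congr rfl fun i hi => by
        rw [Function.update_of_ne (Finset.ne_of_mem_erase hi)]
    have h1 : ∏ i ∈ range k, u i ^ (Function.update l t (l t + 1)) i
        = u t * ∏ i ∈ range k, u i ^ l i := by
      rw [← Finset.mul_prod_erase (range k)
            (fun i => u i ^ (Function.update l t (l t + 1)) i) htm,
          ← Finset.mul_prod_erase (range k) (fun i => u i ^ l i) htm, h2,
          Function.update_self, pow_succ]
      ring
    have hs : D + 1 ≤ ∑ i ∈ range k, (Function.update l t (l t + 1)) i := by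
      rw [Finset.sum_update_of_mem htm, Finset.sdiff_singleton_eq_erase]
      have h3 := Finset.add_sum_erase (range k) l htm
      omega
    rw [← h1]
    exact mem_J u _ hs
  | zero => simpa using Submodule.zero_mem _
  | add a b _ _ ha hb => rw [mul_add]; exact Submodule.add_mem _ ha hb
  | smul a b _ hb => rw [mul_smul_comm]; exact Submodule.smul_mem _ _ hb

lemma mul_closure_mem (u : ℕ → R) {k D : ℕ} {z : R}
    (hz : z ∈ AddSubgroup.closure (u '' Set.Iio k)) {x : R} (hx : x ∈ J u k D) :
    z * x ∈ J u k (D + 1) := by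
  induction hz using AddSubgroup.closure_induction with
  | mem w hw => obtain ⟨t, ht, rfl⟩ := hw; exact mul_u_mem u ht hx
  | zero => simpa using Submodule.zero_mem _
  | add a b _ _ ha hb => rw [add_mul]; exact Submodule.add_mem _ ha hb
  | neg a _ ha => rw [neg_mul]; exact Submodule.neg_mem _ ha

lemma prod_mul_mem (u : ℕ → R) {k D : ℕ} (w : ℕ → R) (s : Finset ℕ)
    (hw : ∀ j ∈ s, w j ∈ AddSubgroup.closure (u '' Set.Iio k)) {x : R}
    (hx : x ∈ J u k D) : (∏ j ∈ s, w j) * x ∈ J u k (D + s.card) := by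
  classical
  induction s using Finset.cons_induction with
  | empty => simpa using hx
  | cons a s ha ih =>
    rw [Finset.prod_cons, Finset.card_cons, mul_assoc]
    have h1 := ih (fun j hj => hw j (Finset.mem_cons.mpr (Or.inr hj)))
    have h2 := mul_closure_mem u (hw a (Finset.mem_cons_self a s)) h1
    exact J_mono u k (by omega) h2

lemma key (v : R) (yk : ℕ → R) (nk : ℕ)
    (hu : v * ∏ j ∈ range nk, (v + yk j) = 0) :
    v ^ (nk + 1) = - ∑ t ∈ (range nk).powerset.erase (range nk),
        v ^ (t.card + 1) * ∏ j ∈ range nk \ t, yk j := by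
  have h0 : ∑ t ∈ (range nk).powerset, v ^ (t.card + 1) * ∏ j ∈ range nk \ t, yk j
      = 0 := by
    calc ∑ t ∈ (range nk).powerset, v ^ (t.card + 1) * ∏ j ∈ range nk \ t, yk j
        = v * ∏ j ∈ range nk, (v + yk j) := by
          rw [Finset.prod_add, Finset.mul_sum]
          exact Finset.sum_congr rfl fun t ht => by rw [Finset.prod_const]; ring
      _ = 0 := hu
  have h1 := Finset.add_sum_erase _
    (fun t => v ^ (t.card + 1) * ∏ j ∈ range nk \ t, yk j)
    (Finset.mem_powerset_self (range nk))
  rw [h0] at h1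
  simp only [Finset.card_range, Finset.sdiff_self, Finset.prod_empty, mul_one] at h1
  exact eq_neg_of_add_eq_zero_left h1

end Stmt11Aux

/-- If `u i * ∏_{j < nn i} (u i + y i j) = 0` with each `y i j` in the
additive subgroup generated by the earlier `u t`, and `n = nn 0 + ⋯ + nn (m-1)`,
then every monomial in `u 0, …, u (m-1)` of total degree `≥ n + 1` vanishes;
consequently, for any `z` in the additive subgroup generated by
`u 0, …, u (m-1)`, every monomial `z^{l₀} u 0^{l 0} ⋯ u (m-1)^{l (m-1)}` of
total degree `n + 1` vanishes. -/
theorem stmt11 (R : Type*) [CommRing R] (m : ℕ) (hm : 1 ≤ m)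
    (nn : ℕ → ℕ) (hn : ∀ i < m, 1 ≤ nn i) (n : ℕ)
    (hsum : ∑ i ∈ Finset.range m, nn i = n)
    (u : ℕ → R) (y : ℕ → ℕ → R)
    (hy : ∀ i < m, ∀ j < nn i, y i j ∈ AddSubgroup.closure (u '' Set.Iio i))
    (hu : ∀ i < m, u i * ∏ j ∈ Finset.range (nn i), (u i + y i j) = 0) :
    (∀ l : ℕ → ℕ, n + 1 ≤ ∑ i ∈ Finset.range m, l i →
      ∏ i ∈ Finset.range m, u i ^ l i = 0) ∧
    ∀ z ∈ AddSubgroup.closure (u '' Set.Iio m), ∀ (l0 : ℕ) (l : ℕ → ℕ),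
      l0 + ∑ i ∈ Finset.range m, l i = n + 1 →
      z ^ l0 * ∏ i ∈ Finset.range m, u i ^ l i = 0 := by
  classical
  have main : ∀ k, k ≤ m →
      ∀ x ∈ Stmt11Aux.J u k ((∑ i ∈ Finset.range k, nn i) + 1), x = 0 := by
    intro k
    induction k with
    | zero =>
      intro _ x hx
      have hempty : { x : R | ∃ l : ℕ → ℕ,
          (∑ i ∈ Finset.range 0, nn i) + 1 ≤ ∑ i ∈ Finset.range 0, l i ∧
          x = ∏ i ∈ Finset.range 0, u i ^ l i } = ∅ := by
        ext w; simp
      simp only [Stmt11Aux.J, hempty, Submodule.span_empty, Submodule.mem_bot] at hx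
      exact hx
    | succ k ih =>
      intro hk x hx
      have hkm : k < m := hk
      have ihk := ih (le_of_lt hkm)
      -- auxiliary vanishing statement, by strong induction on the exponent of `u k`
      have aux : ∀ d D, (∑ i ∈ Finset.range k, nn i) + nn k + 1 ≤ d + D →
          ∀ x ∈ Stmt11Aux.J u k D, u k ^ d * x = 0 := by
        intro d
        induction d using Nat.strong_induction_on with
        | _ d IH =>
          intro D hdD x hxJ
          by_cases hd : d ≤ nn k
          · have hx0 : x = 0 := ihk x (Stmt11Aux.J_mono u k (by omega) hxJ)
            rw [hx0, mul_zero]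
          · push_neg at hd
            have hrel := Stmt11Aux.key (u k) (y k) (nn k) (hu k hkm)
            have hdsplit : (d - (nn k + 1)) + (nn k + 1) = d := by omega
            have step1 : u k ^ d * x
                = u k ^ (d - (nn k + 1)) * (u k ^ (nn k + 1) * x) := by
              rw [← mul_assoc, ← pow_add, hdsplit]
            rw [step1, hrel, neg_mul, mul_neg, neg_eq_zero, Finset.sum_mul,
              Finset.mul_sum]
            refine Finset.sum_eq_zero fun t ht => ?_
            have htsub : t ⊆ Finset.range (nn k) :=
              Finset.mem_powerset.mp (Finset.mem_of_mem_erase ht)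
            have htne : t ≠ Finset.range (nn k) := Finset.ne_of_mem_erase ht
            have hcard : t.card < nn k := by
              have := Finset.card_lt_card (lt_of_le_of_ne htsub htne)
              simpa using this
            have hsdcard : (Finset.range (nn k) \ t).card = nn k - t.card := by
              rw [Finset.card_sdiff_of_subset htsub, Finset.card_range]
            have hmem : (∏ j ∈ Finset.range (nn k) \ t, y k j) * x ∈
                Stmt11Aux.J u k (D + (Finset.range (nn k) \ t).card) :=
              Stmt11Aux.prod_mul_mem u (y k) _
                (fun j hj => hy k hkm j (Finset.mem_range.mp (Finset.mem_sdiff.mp hj).1))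
                hxJ
            have hform : u k ^ (d - (nn k + 1)) *
                ((u k ^ (t.card + 1) * ∏ j ∈ Finset.range (nn k) \ t, y k j) * x)
                = u k ^ ((d - (nn k + 1)) + (t.card + 1)) *
                  ((∏ j ∈ Finset.range (nn k) \ t, y k j) * x) := by
              rw [pow_add]; ring
            rw [hform]
            exact IH _ (by omega) _ (by omega) _ hmem
      -- deduce the statement for `k + 1` by span induction
      induction hx using Submodule.span_induction with
      | mem w hw =>
        obtain ⟨l, hl, rfl⟩ := hw
        rw [Finset.sum_range_succ] at hl
        rw [Finset.prod_range_succ, mul_comm]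
        exact aux (l k) (∑ i ∈ Finset.range k, l i)
          (by rw [Finset.sum_range_succ] at hl; omega) _
          (Stmt11Aux.mem_J u l le_rfl)
      | zero => rfl
      | add a b _ _ ha hb => rw [ha, hb, add_zero]
      | smul a b _ hb => rw [hb, smul_zero]
  refine ⟨fun l hl => ?_, fun z hz l0 l hsum0 => ?_⟩
  · exact main m le_rfl _ (Stmt11Aux.mem_J u l (by omega))
  · have pow_mem : ∀ (p D : ℕ) (x : R), x ∈ Stmt11Aux.J u m D →
        z ^ p * x ∈ Stmt11Aux.J u m (D + p) := by
      intro p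
      induction p with
      | zero => intro D x hx; simpa using hx
      | succ p ihp =>
        intro D x hx
        have h1 := Stmt11Aux.mul_closure_mem u hz (ihp D x hx)
        have h2 : z ^ (p + 1) * x = z * (z ^ p * x) := by rw [pow_succ]; ring
        rw [h2]
        exact h1
    have hmem := pow_mem l0 (∑ i ∈ Finset.range m, l i) _
      (Stmt11Aux.mem_J u l le_rfl)
    exact main m le_rfl _ (Stmt11Aux.J_mono u m (by omega) hmem)
end
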